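/- arXiv:1009.2048 — 7 statements merged into one kernel-verified Lean document; each statement's English description precedes it below -/
import Mathlib

section
/- Let (Y_i)_{i=1}^n be i.i.d. real random variables with mean m and variance v, let ψ : ℝ → ℝ be measurable with ψ(x) ≤ log(1 + x + x²/2) for all x, let α > 0, θ ∈ ℝ, and define r(θ) = (1/(αn)) Σ_{i=1}^n ψ(α(Y_i - θ)). Then E[exp(α n r(θ))] ≤ (1 + α(m-θ) + (α²/2)(v + (m-θ)²))^n ≤ exp(n α(m-θ) + (n α²/2)(v + (m-θ)²)). -/
open MeasureTheory ProbabilityTheory Real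

theorem stmt_2 {Ω : Type*} [MeasureSpace Ω] [IsProbabilityMeasure (ℙ : Measure Ω)]
    (n : ℕ) (hn : 0 < n) (Y : Fin n → Ω → ℝ)
    (hmeas : ∀ i, Measurable (Y i))
    (hindep : iIndepFun Y ℙ)
    (hident : ∀ i, IdentDistrib (Y i) (Y ⟨0, hn⟩) ℙ ℙ)
    (hL2 : MemLp (Y ⟨0, hn⟩) 2 ℙ)
    (m v : ℝ) (hm : ∫ ω, Y ⟨0, hn⟩ ω ∂ℙ = m)
    (hv : ∫ ω, (Y ⟨0, hn⟩ ω - m) ^ 2 ∂ℙ = v)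
    (ψ : ℝ → ℝ) (hψmeas : Measurable ψ)
    (hψ : ∀ x : ℝ, ψ x ≤ Real.log (1 + x + x ^ 2 / 2))
    (α : ℝ) (hα : 0 < α) (θ : ℝ)
    (r : Ω → ℝ)
    (hr : ∀ ω, r ω = (1 / (α * n)) * ∑ i, ψ (α * (Y i ω - θ))) :
    (∫ ω, Real.exp (α * n * r ω) ∂ℙ)
        ≤ (1 + α * (m - θ) + α ^ 2 / 2 * (v + (m - θ) ^ 2)) ^ n ∧
      (1 + α * (m - θ) + α ^ 2 / 2 * (v + (m - θ) ^ 2)) ^ n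
        ≤ Real.exp (n * (α * (m - θ)) + n * α ^ 2 / 2 * (v + (m - θ) ^ 2)) := by
  have hv0 : 0 ≤ v := hv ▸ integral_nonneg (fun ω => sq_nonneg _)
  set t : ℝ := m - θ with ht
  set B : ℝ := 1 + α * t + α ^ 2 / 2 * (v + t ^ 2) with hB
  clear_value t B
  have hB0 : 0 ≤ B := by rw [hB]; nlinarith [sq_nonneg (1 + α * t), sq_nonneg α, mul_nonneg (sq_nonneg α) hv0]
  -- second inequality
  have h2 : B ^ n ≤ Real.exp (n * (α * t) + n * α ^ 2 / 2 * (v + t ^ 2)) := by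
    have hBle : B ≤ Real.exp (α * t + α ^ 2 / 2 * (v + t ^ 2)) := by
      have := Real.add_one_le_exp (α * t + α ^ 2 / 2 * (v + t ^ 2))
      linarith
    calc B ^ n ≤ (Real.exp (α * t + α ^ 2 / 2 * (v + t ^ 2))) ^ n :=
          pow_le_pow_left₀ hB0 hBle n
      _ = Real.exp (n * (α * t) + n * α ^ 2 / 2 * (v + t ^ 2)) := by
          rw [← Real.exp_nat_mul]; ring_nf
  refine ⟨?_, h2⟩
  -- notation
  set X : Fin n → Ω → ℝ := fun i ω => ψ (α * (Y i ω - θ)) with hX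
  have hgmeas : Measurable (fun y : ℝ => ψ (α * (y - θ))) :=
    hψmeas.comp (measurable_const.mul (measurable_id.sub measurable_const))
  have hXmeas : ∀ i, Measurable (X i) := fun i => hgmeas.comp (hmeas i)
  have hXindep : iIndepFun X ℙ :=
    hindep.comp (fun _ y => ψ (α * (y - θ))) (fun _ => hgmeas)
  -- rewrite exponent
  have hαn : α * (n : ℝ) ≠ 0 := by positivity
  have hrw : ∀ ω, α * n * r ω = ∑ i, X i ω := by
    intro ω
    rw [hr ω]
    field_simp
    rfl
  -- memℒp and integrability
  have hY2 : ∀ i, MemLp (Y i) 2 ℙ := fun i => (hident i).symm.memLp_snd hL2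
  have hYθ2 : ∀ i, MemLp (fun ω => Y i ω - θ) 2 ℙ := fun i => (hY2 i).sub (memLp_const θ)
  have hint1 : ∀ i, Integrable (fun ω => Y i ω - θ) ℙ := fun i =>
    (hYθ2 i).integrable (by norm_num)
  have hint2 : ∀ i, Integrable (fun ω => (Y i ω - θ) ^ 2) ℙ := fun i => (hYθ2 i).integrable_sq
  -- pointwise bound
  have hle : ∀ (i : Fin n) ω, Real.exp (X i ω)
      ≤ 1 + α * (Y i ω - θ) + α ^ 2 / 2 * (Y i ω - θ) ^ 2 := by
    intro i ω
    set x : ℝ := α * (Y i ω - θ) with hx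
    have hpos : 0 < 1 + x + x ^ 2 / 2 := by nlinarith [sq_nonneg (1 + x)]
    calc Real.exp (X i ω) ≤ Real.exp (Real.log (1 + x + x ^ 2 / 2)) :=
          Real.exp_le_exp.mpr (hψ x)
      _ = 1 + x + x ^ 2 / 2 := Real.exp_log hpos
      _ = 1 + α * (Y i ω - θ) + α ^ 2 / 2 * (Y i ω - θ) ^ 2 := by rw [hx]; ring
  -- mean computations
  have hmean1 : ∀ i, ∫ ω, (Y i ω - θ) ∂ℙ = t := by
    intro i
    rw [integral_sub ((hY2 i).integrable (by norm_num)) (integrable_const θ)]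
    have : ∫ ω, Y i ω ∂ℙ = m := ((hident i).integral_eq).trans hm
    simp [this, ht]
  have hmean2 : ∀ i, ∫ ω, (Y i ω - θ) ^ 2 ∂ℙ = v + t ^ 2 := by
    intro i
    have hid : IdentDistrib (fun ω => (Y i ω - θ) ^ 2) (fun ω => (Y ⟨0, hn⟩ ω - θ) ^ 2) ℙ ℙ :=
      (hident i).comp (by fun_prop : Measurable (fun y : ℝ => (y - θ) ^ 2))
    rw [hid.integral_eq]
    -- expand around m for Y 0
    have h0θ2 : MemLp (fun ω => Y ⟨0, hn⟩ ω - m) 2 ℙ := hL2.sub (memLp_const m)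
    have e1 : Integrable (fun ω => (Y ⟨0, hn⟩ ω - m) ^ 2) ℙ := h0θ2.integrable_sq
    have e2 : Integrable (fun ω => 2 * t * (Y ⟨0, hn⟩ ω - m)) ℙ :=
      (h0θ2.integrable (by norm_num)).const_mul _
    have hexp : ∀ ω, (Y ⟨0, hn⟩ ω - θ) ^ 2
        = (Y ⟨0, hn⟩ ω - m) ^ 2 + 2 * t * (Y ⟨0, hn⟩ ω - m) + t ^ 2 := by
      intro ω; simp only [ht]; ring
    rw [show (fun ω => (Y ⟨0, hn⟩ ω - θ) ^ 2)
        = fun ω => (Y ⟨0, hn⟩ ω - m) ^ 2 + 2 * t * (Y ⟨0, hn⟩ ω - m) + t ^ 2 from funext hexp]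
    have e12 : Integrable (fun ω => (Y ⟨0, hn⟩ ω - m) ^ 2 + 2 * t * (Y ⟨0, hn⟩ ω - m)) ℙ :=
      e1.add e2
    rw [integral_add e12 (integrable_const _), integral_add e1 e2,
      integral_const_mul, integral_sub (hL2.integrable (by norm_num)) (integrable_const m)]
    simp [hv, hm]
  -- each factor bounded by B
  have hkey : ∀ i : Fin n, ∫ ω, Real.exp (X i ω) ∂ℙ ≤ B := by
    intro i
    have hRint : Integrable (fun ω => 1 + α * (Y i ω - θ) + α ^ 2 / 2 * (Y i ω - θ) ^ 2) ℙ :=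
      ((integrable_const (1:ℝ)).add ((hint1 i).const_mul α)).add ((hint2 i).const_mul _)
    have hmono := integral_mono_of_nonneg
      (Filter.Eventually.of_forall fun ω => (Real.exp_pos (X i ω)).le) hRint
      (Filter.Eventually.of_forall (hle i))
    have hcalc : ∫ ω, (1 + α * (Y i ω - θ) + α ^ 2 / 2 * (Y i ω - θ) ^ 2) ∂ℙ = B := by
      have g1 : Integrable (fun ω => α * (Y i ω - θ)) ℙ := (hint1 i).const_mul α
      have g2 : Integrable (fun ω => α ^ 2 / 2 * (Y i ω - θ) ^ 2) ℙ := (hint2 i).const_mul _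
      have g12 : Integrable (fun ω => 1 + α * (Y i ω - θ)) ℙ := (integrable_const (1:ℝ)).add g1
      rw [integral_add g12 g2, integral_add (integrable_const (1:ℝ)) g1,
        integral_const_mul, integral_const_mul, hmean1 i, hmean2 i]
      simp [hB]
    exact le_of_le_of_eq hmono hcalc
  -- main chain
  have hmgf : (∫ ω, Real.exp (α * n * r ω) ∂ℙ) = ∏ i, ∫ ω, Real.exp (X i ω) ∂ℙ := by
    have hsum := hXindep.mgf_sum hXmeas Finset.univ (t := 1)
    have hl : mgf (∑ i, X i) ℙ 1 = ∫ ω, Real.exp (α * n * r ω) ∂ℙ := by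
      unfold mgf
      congr 1
      funext ω
      simp [hrw ω, Finset.sum_apply]
    have hr' : ∀ i, mgf (X i) ℙ 1 = ∫ ω, Real.exp (X i ω) ∂ℙ := by
      intro i; unfold mgf; simp
    rw [← hl, hsum]
    exact Finset.prod_congr rfl (fun i _ => hr' i)
  rw [hmgf]
  calc (∏ i, ∫ ω, Real.exp (X i ω) ∂ℙ) ≤ ∏ _i : Fin n, B :=
        Finset.prod_le_prod (fun i _ => integral_nonneg fun ω => (Real.exp_pos _).le)
          (fun i _ => hkey i)
    _ = B ^ n := by simp
end

section
/- Let (Y_i)_{i=1}^n be i.i.d. with mean m and variance v, let ψ satisfy -log(1 - x + x²/2) ≤ ψ(x) ≤ log(1 + x + x²/2), let α > 0, ε ∈ (0,1), and define r(θ) = (1/(αn)) Σ ψ(α(Y_i - θ)), B₊(θ) = m - θ + (α/2)(v + (m-θ)²) + log(ε⁻¹)/(nα), B₋(θ) = m - θ - (α/2)(v + (m-θ)²) - log(ε⁻¹)/(nα). Then P[r(θ) < B₊(θ)] ≥ 1 - ε and P[r(θ) > B₋(θ)] ≥ 1 - ε. -/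
open MeasureTheory ProbabilityTheory Real

lemma aux_tail {Ω : Type*} [MeasureSpace Ω] [IsProbabilityMeasure (ℙ : Measure Ω)]
    (n : ℕ) (hn : 0 < n) (X : Fin n → Ω → ℝ)
    (hmeas : ∀ i, Measurable (X i))
    (hindep : iIndepFun X ℙ)
    (hident : ∀ i, IdentDistrib (X i) (X ⟨0, hn⟩) ℙ ℙ)
    (hint : Integrable (fun ω => exp (X ⟨0, hn⟩ ω)) ℙ)
    (c : ℝ) (hc : ∫ ω, exp (X ⟨0, hn⟩ ω) ∂ℙ ≤ exp c)
    (ε : ℝ) (hε : 0 < ε) (t : ℝ) (ht : n * c + Real.log ε⁻¹ ≤ t) :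
    ℙ {ω | t ≤ ∑ i, X i ω} ≤ ENNReal.ofReal ε := by
  have hint1 : ∀ i : Fin n, Integrable (fun ω => exp (1 * X i ω)) ℙ := by
    intro i
    simp only [one_mul]
    exact ((hident i).comp measurable_exp).integrable_iff.mpr hint
  have hintS : Integrable (fun ω => exp (1 * (∑ i, X i) ω)) ℙ :=
    hindep.integrable_exp_mul_sum hmeas (fun i _ => hint1 i)
  have key := measure_ge_le_exp_mul_mgf (X := ∑ i, X i) (μ := ℙ) t zero_le_one hintS
  have hmgf0 : mgf (X ⟨0, hn⟩) ℙ 1 ≤ exp c := by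
    unfold mgf
    simpa using hc
  have hmgf : mgf (∑ i, X i) ℙ 1 ≤ exp ((n : ℝ) * c) := by
    rw [hindep.mgf_sum hmeas]
    have h1 : ∀ i : Fin n, mgf (X i) ℙ 1 = mgf (X ⟨0, hn⟩) ℙ 1 := by
      intro i
      exact ((hident i).comp (measurable_exp.comp (measurable_id.const_mul 1))).integral_eq
    calc ∏ i, mgf (X i) ℙ 1 = (mgf (X ⟨0, hn⟩) ℙ 1) ^ n := by
          simp [h1]
      _ ≤ (exp c) ^ n := by
          apply pow_le_pow_left₀ (mgf_nonneg) hmgf0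
      _ = exp ((n : ℝ) * c) := (exp_nat_mul c n).symm
  have htoReal : (ℙ {ω | t ≤ (∑ i, X i) ω}).toReal ≤ ε := by
    refine key.trans ?_
    calc exp (-1 * t) * mgf (∑ i, X i) ℙ 1
        ≤ exp (-1 * t) * exp ((n : ℝ) * c) := by gcongr
      _ = exp ((n : ℝ) * c - t) := by rw [← exp_add]; ring_nf
      _ ≤ exp (Real.log ε) := by
          apply exp_le_exp.mpr
          rw [Real.log_inv] at ht; linarith
      _ = ε := exp_log hε
  have hne : ℙ {ω | t ≤ (∑ i, X i) ω} ≠ ⊤ := measure_ne_top _ _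
  have hfin : ℙ {ω | t ≤ (∑ i, X i) ω} ≤ ENNReal.ofReal ε := by
    rw [← ENNReal.ofReal_toReal hne]
    exact ENNReal.ofReal_le_ofReal htoReal
  simpa [Finset.sum_apply] using hfin
lemma aux_tail2 {Ω : Type*} [MeasureSpace Ω] [IsProbabilityMeasure (ℙ : Measure Ω)]
    (n : ℕ) (hn : 0 < n) (Y : Fin n → Ω → ℝ)
    (hmeas : ∀ i, Measurable (Y i))
    (hindep : iIndepFun Y ℙ)
    (hident : ∀ i, IdentDistrib (Y i) (Y ⟨0, hn⟩) ℙ ℙ)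
    (hL2 : MemLp (Y ⟨0, hn⟩) 2 ℙ)
    (m v : ℝ) (hm : ∫ ω, Y ⟨0, hn⟩ ω ∂ℙ = m)
    (hv : ∫ ω, (Y ⟨0, hn⟩ ω - m) ^ 2 ∂ℙ = v)
    (φ : ℝ → ℝ) (hφmeas : Measurable φ) (s : ℝ)
    (hφ : ∀ x : ℝ, exp (φ x) ≤ 1 + s * x + x ^ 2 / 2)
    (α : ℝ) (hα : 0 < α) (θ : ℝ) (ε : ℝ) (hε : 0 < ε) (t : ℝ)
    (ht : n * (s * α * (m - θ) + α ^ 2 / 2 * (v + (m - θ) ^ 2)) + Real.log ε⁻¹ ≤ t) :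
    ℙ {ω | t ≤ ∑ i, φ (α * (Y i ω - θ))} ≤ ENNReal.ofReal ε := by
  have hg : Measurable (fun y : ℝ => φ (α * (y - θ))) :=
    hφmeas.comp ((measurable_id.sub_const θ).const_mul α)
  have hXmeas : ∀ i, Measurable (fun ω => φ (α * (Y i ω - θ))) := fun i => hg.comp (hmeas i)
  have hXindep : iIndepFun (fun i ω => φ (α * (Y i ω - θ))) ℙ :=
    hindep.comp _ (fun _ => hg)
  have hXident : ∀ i : Fin n,
      IdentDistrib (fun ω => φ (α * (Y i ω - θ))) (fun ω => φ (α * (Y ⟨0, hn⟩ ω - θ))) ℙ ℙ :=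
    fun i => (hident i).comp hg
  have hYint : Integrable (Y ⟨0, hn⟩) ℙ := hL2.integrable one_le_two
  have hsub : Integrable (fun ω => Y ⟨0, hn⟩ ω - θ) ℙ := hYint.sub (integrable_const θ)
  have hsq : Integrable (fun ω => (Y ⟨0, hn⟩ ω - θ) ^ 2) ℙ :=
    (hL2.sub (memLp_const θ)).integrable_sq
  have hF : Integrable
      (fun ω => 1 + (s * α) * (Y ⟨0, hn⟩ ω - θ) + (α ^ 2 / 2) * (Y ⟨0, hn⟩ ω - θ) ^ 2) ℙ :=
    ((integrable_const 1).add (hsub.const_mul (s * α))).add (hsq.const_mul (α ^ 2 / 2))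
  have hbound : ∀ ω, exp (φ (α * (Y ⟨0, hn⟩ ω - θ))) ≤
      1 + (s * α) * (Y ⟨0, hn⟩ ω - θ) + (α ^ 2 / 2) * (Y ⟨0, hn⟩ ω - θ) ^ 2 := by
    intro ω
    calc exp (φ (α * (Y ⟨0, hn⟩ ω - θ)))
        ≤ 1 + s * (α * (Y ⟨0, hn⟩ ω - θ)) + (α * (Y ⟨0, hn⟩ ω - θ)) ^ 2 / 2 := hφ _
      _ = 1 + (s * α) * (Y ⟨0, hn⟩ ω - θ) + (α ^ 2 / 2) * (Y ⟨0, hn⟩ ω - θ) ^ 2 := by ring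
  have hint : Integrable (fun ω => exp (φ (α * (Y ⟨0, hn⟩ ω - θ)))) ℙ := by
    refine hF.mono' (measurable_exp.comp (hXmeas _)).aestronglyMeasurable (ae_of_all _ ?_)
    intro ω
    rw [Real.norm_eq_abs, abs_of_pos (exp_pos _)]
    exact hbound ω
  have hmean : ∫ ω, (Y ⟨0, hn⟩ ω - θ) ∂ℙ = m - θ := by
    rw [integral_sub hYint (integrable_const θ), hm, integral_const]; simp
  have hYm : Integrable (fun ω => Y ⟨0, hn⟩ ω - m) ℙ := hYint.sub (integrable_const m)
  have hsqm : Integrable (fun ω => (Y ⟨0, hn⟩ ω - m) ^ 2) ℙ :=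
    (hL2.sub (memLp_const m)).integrable_sq
  have hmean0 : ∫ ω, (Y ⟨0, hn⟩ ω - m) ∂ℙ = 0 := by
    rw [integral_sub hYint (integrable_const m), hm, integral_const]; simp
  have hsqint : ∫ ω, (Y ⟨0, hn⟩ ω - θ) ^ 2 ∂ℙ = v + (m - θ) ^ 2 := by
    have e : (fun ω => (Y ⟨0, hn⟩ ω - θ) ^ 2) =
        fun ω => (Y ⟨0, hn⟩ ω - m) ^ 2 + (2 * (m - θ)) * (Y ⟨0, hn⟩ ω - m) + (m - θ) ^ 2 := by
      funext ω; ring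
    have i1 : Integrable (fun ω => (Y ⟨0, hn⟩ ω - m) ^ 2 + 2 * (m - θ) * (Y ⟨0, hn⟩ ω - m)) ℙ :=
      hsqm.add (hYm.const_mul _)
    rw [e, integral_add i1 (integrable_const _),
        integral_add hsqm (hYm.const_mul _), hv, integral_const_mul, hmean0, integral_const]
    simp
  have hc : ∫ ω, exp (φ (α * (Y ⟨0, hn⟩ ω - θ))) ∂ℙ ≤
      exp (s * α * (m - θ) + α ^ 2 / 2 * (v + (m - θ) ^ 2)) := by
    have h1 := integral_mono hint hF hbound
    have h2 : ∫ ω, (1 + (s * α) * (Y ⟨0, hn⟩ ω - θ) + (α ^ 2 / 2) * (Y ⟨0, hn⟩ ω - θ) ^ 2) ∂ℙ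
        = 1 + (s * α * (m - θ) + α ^ 2 / 2 * (v + (m - θ) ^ 2)) := by
      have i2 : Integrable (fun ω => 1 + s * α * (Y ⟨0, hn⟩ ω - θ)) ℙ :=
        (integrable_const 1).add (hsub.const_mul _)
      rw [integral_add i2 (hsq.const_mul _),
          integral_add (integrable_const 1) (hsub.const_mul _),
          integral_const, integral_const_mul, integral_const_mul, hmean, hsqint]
      simp; ring
    rw [h2] at h1
    refine h1.trans ?_
    linarith [add_one_le_exp (s * α * (m - θ) + α ^ 2 / 2 * (v + (m - θ) ^ 2))]
  exact aux_tail n hn (fun i ω => φ (α * (Y i ω - θ))) hXmeas hXindep hXident hint _ hc ε hε t ht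

theorem stmt_3 {Ω : Type*} [MeasureSpace Ω] [IsProbabilityMeasure (ℙ : Measure Ω)]
    (n : ℕ) (hn : 0 < n) (Y : Fin n → Ω → ℝ)
    (hmeas : ∀ i, Measurable (Y i))
    (hindep : iIndepFun Y ℙ)
    (hident : ∀ i, IdentDistrib (Y i) (Y ⟨0, hn⟩) ℙ ℙ)
    (hL2 : MemLp (Y ⟨0, hn⟩) 2 ℙ)
    (m v : ℝ) (hm : ∫ ω, Y ⟨0, hn⟩ ω ∂ℙ = m)
    (hv : ∫ ω, (Y ⟨0, hn⟩ ω - m) ^ 2 ∂ℙ = v)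
    (ψ : ℝ → ℝ) (hψmeas : Measurable ψ)
    (hψ : ∀ x : ℝ, -Real.log (1 - x + x ^ 2 / 2) ≤ ψ x ∧
      ψ x ≤ Real.log (1 + x + x ^ 2 / 2))
    (α : ℝ) (hα : 0 < α) (ε : ℝ) (hε : ε ∈ Set.Ioo (0 : ℝ) 1) (θ : ℝ)
    (r : Ω → ℝ)
    (hr : ∀ ω, r ω = (1 / (α * n)) * ∑ i, ψ (α * (Y i ω - θ)))
    (Bplus Bminus : ℝ)
    (hBplus : Bplus = m - θ + α / 2 * (v + (m - θ) ^ 2) + Real.log ε⁻¹ / (n * α))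
    (hBminus : Bminus = m - θ - α / 2 * (v + (m - θ) ^ 2) - Real.log ε⁻¹ / (n * α)) :
    ℙ {ω | r ω < Bplus} ≥ ENNReal.ofReal (1 - ε) ∧
      ℙ {ω | r ω > Bminus} ≥ ENNReal.ofReal (1 - ε) := by
  obtain ⟨hε0, hε1⟩ := hε
  have hn' : (n : ℝ) ≠ 0 := Nat.cast_ne_zero.mpr hn.ne'
  have hnα : (0 : ℝ) < α * n := by positivity
  have hpos1 : ∀ x : ℝ, 0 < 1 + x + x ^ 2 / 2 := fun x => by nlinarith [sq_nonneg (x + 1)]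
  have hpos2 : ∀ x : ℝ, 0 < 1 - x + x ^ 2 / 2 := fun x => by nlinarith [sq_nonneg (x - 1)]
  have hφ1 : ∀ x : ℝ, exp (ψ x) ≤ 1 + 1 * x + x ^ 2 / 2 := by
    intro x
    rw [one_mul]
    calc exp (ψ x) ≤ exp (Real.log (1 + x + x ^ 2 / 2)) := exp_le_exp.mpr (hψ x).2
      _ = 1 + x + x ^ 2 / 2 := exp_log (hpos1 x)
  have hφ2 : ∀ x : ℝ, exp (-ψ x) ≤ 1 + (-1) * x + x ^ 2 / 2 := by
    intro x
    have h : -ψ x ≤ Real.log (1 - x + x ^ 2 / 2) := by linarith [(hψ x).1]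
    calc exp (-ψ x) ≤ exp (Real.log (1 - x + x ^ 2 / 2)) := exp_le_exp.mpr h
      _ = 1 - x + x ^ 2 / 2 := exp_log (hpos2 x)
      _ = 1 + (-1) * x + x ^ 2 / 2 := by ring
  have hg : Measurable (fun y : ℝ => ψ (α * (y - θ))) :=
    hψmeas.comp ((measurable_id.sub_const θ).const_mul α)
  have hofReal : ENNReal.ofReal (1 - ε) = 1 - ENNReal.ofReal ε := by
    rw [ENNReal.ofReal_sub _ hε0.le, ENNReal.ofReal_one]
  constructor
  · -- upper tail
    have ht1 : (n : ℝ) * (1 * α * (m - θ) + α ^ 2 / 2 * (v + (m - θ) ^ 2)) + Real.log ε⁻¹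
        ≤ α * n * Bplus := by
      refine le_of_eq ?_
      rw [hBplus]
      field_simp
    have tail1 := aux_tail2 n hn Y hmeas hindep hident hL2 m v hm hv ψ hψmeas 1 hφ1 α hα θ
      ε hε0 (α * n * Bplus) ht1
    have hset1 : {ω | r ω < Bplus} =
        {ω | α * (n : ℝ) * Bplus ≤ ∑ i, ψ (α * (Y i ω - θ))}ᶜ := by
      ext ω
      simp only [Set.mem_compl_iff, Set.mem_setOf_eq, not_le, hr ω]
      rw [one_div, inv_mul_eq_div, div_lt_iff₀ hnα, mul_comm Bplus (α * (n : ℝ))]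
    have hSmeas : MeasurableSet {ω | α * (n : ℝ) * Bplus ≤ ∑ i, ψ (α * (Y i ω - θ))} :=
      measurableSet_le measurable_const (Finset.measurable_sum _ fun i _ => hg.comp (hmeas i))
    rw [hset1, measure_compl hSmeas (measure_ne_top _ _), measure_univ, hofReal]
    exact tsub_le_tsub_left tail1 1
  · -- lower tail
    have hφ2meas : Measurable (fun x : ℝ => -ψ x) := hψmeas.neg
    have ht2 : (n : ℝ) * ((-1) * α * (m - θ) + α ^ 2 / 2 * (v + (m - θ) ^ 2)) + Real.log ε⁻¹
        ≤ -(α * n * Bminus) := by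
      refine le_of_eq ?_
      rw [hBminus]
      field_simp
      ring
    have tail2 := aux_tail2 n hn Y hmeas hindep hident hL2 m v hm hv (fun x => -ψ x) hφ2meas
      (-1) hφ2 α hα θ ε hε0 (-(α * n * Bminus)) ht2
    have tail2' : ℙ {ω | -(α * (n : ℝ) * Bminus) ≤ ∑ i, -ψ (α * (Y i ω - θ))}
        ≤ ENNReal.ofReal ε := tail2
    have hset2 : {ω | r ω > Bminus} =
        {ω | -(α * (n : ℝ) * Bminus) ≤ ∑ i, -ψ (α * (Y i ω - θ))}ᶜ := by
      ext ω
      simp only [Set.mem_compl_iff, Set.mem_setOf_eq, not_le, gt_iff_lt, hr ω,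
        Finset.sum_neg_distrib, neg_lt_neg_iff]
      rw [one_div, inv_mul_eq_div, lt_div_iff₀ hnα, mul_comm Bminus (α * (n : ℝ))]
    have hSmeas : MeasurableSet {ω | -(α * (n : ℝ) * Bminus) ≤ ∑ i, -ψ (α * (Y i ω - θ))} :=
      measurableSet_le measurable_const
        (Finset.measurable_sum _ fun i _ => (hg.comp (hmeas i)).neg)
    rw [hset2, measure_compl hSmeas (measure_ne_top _ _), measure_univ, hofReal]
    exact tsub_le_tsub_left tail2' 1
end

section
/- Let I be a finite index set of size p ≥ 2 and (Y_i)_{i∈I} i.i.d. with mean m, variance v and kurtosis κ < ∞. Then Σ over pairs {i<j}, {s<t} in I of E[((Y_i - Y_j)² - 2v)((Y_s - Y_t)² - 2v)] = p(p-1)²(κ - 1 + 2/(p-1)) v². -/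
open MeasureTheory ProbabilityTheory Real
open scoped ENNReal

section Aux
set_option linter.unusedSectionVars false
variable {Ω : Type*} [MeasureSpace Ω] [IsProbabilityMeasure (ℙ : Measure Ω)]

lemma aux_half : (1:ℝ≥0∞)/2 = 1/4 + 1/4 := by
  rw [ENNReal.div_add_div_same,
    ENNReal.div_eq_div_iff (by norm_num) (by norm_num) (by norm_num) (by norm_num)]
  norm_num

lemma aux_one : (1:ℝ≥0∞)/1 = 1/2 + 1/2 := by
  rw [ENNReal.div_add_div_same,
    ENNReal.div_eq_div_iff (by norm_num) (by norm_num) (by norm_num) (by norm_num)]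
  norm_num

lemma aux_mul_l2 {f g : Ω → ℝ} (hf : MemLp f 4 ℙ) (hg : MemLp g 4 ℙ) :
    MemLp (fun ω => f ω * g ω) 2 ℙ := by
  haveI : ENNReal.HolderTriple 4 4 2 := ⟨by simpa only [one_div] using aux_half.symm⟩
  exact hg.smul (φ := f) hf

lemma aux_mul_int {f g : Ω → ℝ} (hf : MemLp f 2 ℙ) (hg : MemLp g 2 ℙ) :
    Integrable (fun ω => f ω * g ω) ℙ := by
  rw [← memLp_one_iff_integrable]
  haveI : ENNReal.HolderTriple 2 2 1 := ⟨by simpa only [one_div] using aux_one.symm⟩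
  exact hg.smul (φ := f) hf

lemma aux_pow_int {f : Ω → ℝ} (hf : MemLp f 4 ℙ) {k : ℕ} (hk : k ≤ 4) :
    Integrable (fun ω => f ω ^ k) ℙ := by
  have hf2 : MemLp f 2 ℙ := hf.mono_exponent (by norm_num)
  have hsq : MemLp (fun ω => f ω ^ 2) 2 ℙ := by simpa [sq] using aux_mul_l2 hf hf
  interval_cases k
  · simpa using integrable_const (1:ℝ)
  · simpa using hf.integrable (by norm_num)
  · exact hf2.integrable_sq
  · exact (aux_mul_int hsq hf2).congr (Filter.Eventually.of_forall fun ω => by ring)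
  · simpa [← pow_mul] using hsq.integrable_sq

variable {p : ℕ} {X : Fin p → Ω → ℝ}

lemma pair_fact (hmeas : ∀ i, Measurable (X i))
    (hindep : iIndepFun X ℙ) {i j : Fin p} (hij : i ≠ j) (k l : ℕ) :
    ∫ ω, (X i ω)^k * (X j ω)^l ∂ℙ = (∫ ω, (X i ω)^k ∂ℙ) * ∫ ω, (X j ω)^l ∂ℙ := by
  have h : IndepFun (fun ω => (X i ω)^k) (fun ω => (X j ω)^l) ℙ :=
    (hindep.indepFun hij).comp (measurable_id.pow_const k) (measurable_id.pow_const l)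
  exact h.integral_fun_mul_eq_mul_integral ((hmeas i).pow_const k).aestronglyMeasurable
    ((hmeas j).pow_const l).aestronglyMeasurable

lemma triple_indep (hmeas : ∀ i, Measurable (X i))
    (hindep : iIndepFun X ℙ) {a b c : Fin p}
    (hab : a ≠ b) (hac : a ≠ c) (k l m : ℕ) :
    IndepFun (fun ω => (X a ω)^k) (fun ω => (X b ω)^l * (X c ω)^m) ℙ := by
  have h := (hindep.indepFun_prodMk hmeas b c a hab.symm hac.symm).symm
  exact h.comp (measurable_id.pow_const k)
    ((measurable_fst.pow_const l).mul (measurable_snd.pow_const m))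

lemma triple_fact (hmeas : ∀ i, Measurable (X i))
    (hindep : iIndepFun X ℙ) {a b c : Fin p}
    (hab : a ≠ b) (hac : a ≠ c) (hbc : b ≠ c) (k l m : ℕ) :
    ∫ ω, (X a ω)^k * ((X b ω)^l * (X c ω)^m) ∂ℙ
      = (∫ ω, (X a ω)^k ∂ℙ) * ((∫ ω, (X b ω)^l ∂ℙ) * ∫ ω, (X c ω)^m ∂ℙ) := by
  have h1 : ∫ ω, (X a ω)^k * ((X b ω)^l * (X c ω)^m) ∂ℙ
      = (∫ ω, (X a ω)^k ∂ℙ) * ∫ ω, (X b ω)^l * (X c ω)^m ∂ℙ :=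
    (triple_indep hmeas hindep hab hac k l m).integral_fun_mul_eq_mul_integral
      ((hmeas a).pow_const k).aestronglyMeasurable
      (((hmeas b).pow_const l).mul ((hmeas c).pow_const m)).aestronglyMeasurable
  rw [h1, pair_fact hmeas hindep hbc l m]

lemma pair_int (hmeas : ∀ i, Measurable (X i))
    (hindep : iIndepFun X ℙ)
    (hL4 : ∀ i, MemLp (X i) 4 ℙ) {i j : Fin p} (hij : i ≠ j) {k l : ℕ}
    (hk : k ≤ 4) (hl : l ≤ 4) :
    Integrable (fun ω => (X i ω)^k * (X j ω)^l) ℙ := by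
  have h : IndepFun (fun ω => (X i ω)^k) (fun ω => (X j ω)^l) ℙ :=
    (hindep.indepFun hij).comp (measurable_id.pow_const k) (measurable_id.pow_const l)
  exact h.integrable_mul (aux_pow_int (hL4 i) hk) (aux_pow_int (hL4 j) hl)

lemma triple_int (hmeas : ∀ i, Measurable (X i))
    (hindep : iIndepFun X ℙ)
    (hL4 : ∀ i, MemLp (X i) 4 ℙ) {a b c : Fin p}
    (hab : a ≠ b) (hac : a ≠ c) (hbc : b ≠ c) {k l m : ℕ}
    (hk : k ≤ 4) (hl : l ≤ 4) (hm : m ≤ 4) :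
    Integrable (fun ω => (X a ω)^k * ((X b ω)^l * (X c ω)^m)) ℙ :=
  (triple_indep hmeas hindep hab hac k l m).integrable_mul
    (aux_pow_int (hL4 a) hk) (pair_int hmeas hindep hL4 hbc hl hm)

end Aux

section Aux2
variable {Ω : Type*} [MeasureSpace Ω] [IsProbabilityMeasure (ℙ : Measure Ω)]

lemma integral_comb {n : ℕ} (c : Fin n → ℝ) {t : Fin n → Ω → ℝ}
    (hInt : ∀ z, Integrable (t z) ℙ) :
    ∫ ω, ∑ z, c z * t z ω ∂ℙ = ∑ z, c z * ∫ ω, t z ω ∂ℙ := by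
  rw [integral_finset_sum _ fun z _ => ((hInt z).const_mul (c z))]
  simp [integral_const_mul]
end Aux2

section Cases
set_option linter.unusedSectionVars false
set_option maxHeartbeats 1000000
variable {Ω : Type*} [MeasureSpace Ω] [IsProbabilityMeasure (ℙ : Measure Ω)]
variable {p : ℕ} {X : Fin p → Ω → ℝ} {v κ w : ℝ}

lemma L_var (hmeas : ∀ i, Measurable (X i))
    (hindep : iIndepFun X ℙ)
    (hL4 : ∀ i, MemLp (X i) 4 ℙ)
    (h1 : ∀ i, ∫ ω, X i ω ∂ℙ = 0) (h2 : ∀ i, ∫ ω, (X i ω)^2 ∂ℙ = v)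
    {i j : Fin p} (hij : i ≠ j) :
    ∫ ω, (X i ω - X j ω)^2 ∂ℙ = 2*v := by
  have key : (fun ω => (X i ω - X j ω)^2)
      = fun ω => ∑ z : Fin 3, ![(1:ℝ), -2, 1] z *
        ![fun ω => (X i ω)^2*(X j ω)^0, fun ω => (X i ω)^1*(X j ω)^1,
          fun ω => (X i ω)^0*(X j ω)^2] z ω := by
    funext ω
    simp [Fin.sum_univ_three]
    ring
  rw [key, integral_comb _ (by
    intro z
    fin_cases z <;>
      exact pair_int hmeas hindep hL4 hij (by norm_num) (by norm_num))]
  simp only [Fin.sum_univ_three, Matrix.cons_val_zero, Matrix.cons_val_one, Matrix.head_cons,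
    Matrix.cons_val_two, Matrix.tail_cons]
  rw [pair_fact hmeas hindep hij, pair_fact hmeas hindep hij, pair_fact hmeas hindep hij]
  simp [h1, h2]
  ring

lemma L_D4 (hmeas : ∀ i, Measurable (X i))
    (hindep : iIndepFun X ℙ)
    (hL4 : ∀ i, MemLp (X i) 4 ℙ)
    (h1 : ∀ i, ∫ ω, X i ω ∂ℙ = 0) (h2 : ∀ i, ∫ ω, (X i ω)^2 ∂ℙ = v)
    (h3 : ∀ i, ∫ ω, (X i ω)^3 ∂ℙ = w) (h4 : ∀ i, ∫ ω, (X i ω)^4 ∂ℙ = κ*v^2)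
    {i j : Fin p} (hij : i ≠ j) :
    ∫ ω, (X i ω - X j ω)^4 ∂ℙ = 2*(κ*v^2) + 6*v^2 := by
  have key : (fun ω => (X i ω - X j ω)^4)
      = fun ω => ∑ z : Fin 5, ![(1:ℝ), -4, 6, -4, 1] z *
        ![fun ω => (X i ω)^4*(X j ω)^0, fun ω => (X i ω)^3*(X j ω)^1,
          fun ω => (X i ω)^2*(X j ω)^2, fun ω => (X i ω)^1*(X j ω)^3,
          fun ω => (X i ω)^0*(X j ω)^4] z ω := by
    funext ω
    simp [Fin.sum_univ_five]
    ring
  rw [key, integral_comb _ (by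
    intro z
    fin_cases z <;>
      exact pair_int hmeas hindep hL4 hij (by norm_num) (by norm_num))]
  simp only [Fin.sum_univ_five, Matrix.cons_val_zero, Matrix.cons_val_one, Matrix.head_cons,
    Matrix.cons_val_two, Matrix.tail_cons, Matrix.cons_val_three, Matrix.cons_val_four]
  rw [pair_fact hmeas hindep hij, pair_fact hmeas hindep hij, pair_fact hmeas hindep hij,
    pair_fact hmeas hindep hij, pair_fact hmeas hindep hij]
  simp [h1, h2, h3, h4]
  ring

lemma L_AB2 (hmeas : ∀ i, Measurable (X i))
    (hindep : iIndepFun X ℙ)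
    (hL4 : ∀ i, MemLp (X i) 4 ℙ)
    (h1 : ∀ i, ∫ ω, X i ω ∂ℙ = 0) (h2 : ∀ i, ∫ ω, (X i ω)^2 ∂ℙ = v)
    (h3 : ∀ i, ∫ ω, (X i ω)^3 ∂ℙ = w) (h4 : ∀ i, ∫ ω, (X i ω)^4 ∂ℙ = κ*v^2)
    {a b c : Fin p} (hab : a ≠ b) (hac : a ≠ c) (hbc : b ≠ c) :
    ∫ ω, (X a ω - X c ω)^2 * (X b ω - X c ω)^2 ∂ℙ = (κ+3)*v^2 := by
  have key : (fun ω => (X a ω - X c ω)^2 * (X b ω - X c ω)^2)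
      = fun ω => ∑ z : Fin 9, ![(1:ℝ), -2, 1, -2, 4, -2, 1, -2, 1] z *
        ![fun ω => (X a ω)^2*((X b ω)^2*(X c ω)^0),
          fun ω => (X a ω)^2*((X b ω)^1*(X c ω)^1),
          fun ω => (X a ω)^2*((X b ω)^0*(X c ω)^2),
          fun ω => (X a ω)^1*((X b ω)^2*(X c ω)^1),
          fun ω => (X a ω)^1*((X b ω)^1*(X c ω)^2),
          fun ω => (X a ω)^1*((X b ω)^0*(X c ω)^3),
          fun ω => (X a ω)^0*((X b ω)^2*(X c ω)^2),
          fun ω => (X a ω)^0*((X b ω)^1*(X c ω)^3),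
          fun ω => (X a ω)^0*((X b ω)^0*(X c ω)^4)] z ω := by
    funext ω
    simp [Fin.sum_univ_succ]
    ring
  rw [key, integral_comb _ (by
    intro z
    fin_cases z <;>
      exact triple_int hmeas hindep hL4 hab hac hbc (by norm_num) (by norm_num) (by norm_num))]
  simp only [Fin.sum_univ_succ, Fin.sum_univ_zero, Matrix.cons_val_zero, Matrix.cons_val_succ]
  rw [triple_fact hmeas hindep hab hac hbc, triple_fact hmeas hindep hab hac hbc,
    triple_fact hmeas hindep hab hac hbc, triple_fact hmeas hindep hab hac hbc,
    triple_fact hmeas hindep hab hac hbc, triple_fact hmeas hindep hab hac hbc,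
    triple_fact hmeas hindep hab hac hbc, triple_fact hmeas hindep hab hac hbc,
    triple_fact hmeas hindep hab hac hbc]
  simp [h1, h2, h3, h4]
  ring

lemma L_mean (hmeas : ∀ i, Measurable (X i))
    (hindep : iIndepFun X ℙ)
    (hL4 : ∀ i, MemLp (X i) 4 ℙ)
    (h1 : ∀ i, ∫ ω, X i ω ∂ℙ = 0) (h2 : ∀ i, ∫ ω, (X i ω)^2 ∂ℙ = v)
    {i j : Fin p} (hij : i ≠ j) :
    ∫ ω, ((X i ω - X j ω)^2 - 2*v) ∂ℙ = 0 := by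
  have hD : MemLp (fun ω => X i ω - X j ω) 4 ℙ := (hL4 i).sub (hL4 j)
  rw [integral_sub (aux_pow_int hD (by norm_num)) (integrable_const _),
    L_var hmeas hindep hL4 h1 h2 hij]
  simp

lemma L_eq (hmeas : ∀ i, Measurable (X i))
    (hindep : iIndepFun X ℙ)
    (hL4 : ∀ i, MemLp (X i) 4 ℙ)
    (h1 : ∀ i, ∫ ω, X i ω ∂ℙ = 0) (h2 : ∀ i, ∫ ω, (X i ω)^2 ∂ℙ = v)
    (h3 : ∀ i, ∫ ω, (X i ω)^3 ∂ℙ = w) (h4 : ∀ i, ∫ ω, (X i ω)^4 ∂ℙ = κ*v^2)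
    {i j : Fin p} (hij : i ≠ j) :
    ∫ ω, ((X i ω - X j ω)^2 - 2*v) * ((X i ω - X j ω)^2 - 2*v) ∂ℙ
      = 2*(κ+1)*v^2 := by
  have hD : MemLp (fun ω => X i ω - X j ω) 4 ℙ := (hL4 i).sub (hL4 j)
  have hD4 : Integrable (fun ω => (X i ω - X j ω)^4) ℙ := aux_pow_int hD (by norm_num)
  have hD2 : Integrable (fun ω => (X i ω - X j ω)^2) ℙ := aux_pow_int hD (by norm_num)
  have key : (fun ω => ((X i ω - X j ω)^2 - 2*v) * ((X i ω - X j ω)^2 - 2*v))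
      = fun ω => ((X i ω - X j ω)^4 - (4*v) * (X i ω - X j ω)^2) + 4*v^2 := by
    funext ω; ring
  have hI1 : Integrable (fun ω => (X i ω - X j ω)^4 - (4*v) * (X i ω - X j ω)^2) ℙ :=
    hD4.sub (hD2.const_mul _)
  rw [key, integral_add hI1 (integrable_const _),
    integral_sub hD4 (hD2.const_mul _), integral_const_mul,
    L_D4 hmeas hindep hL4 h1 h2 h3 h4 hij, L_var hmeas hindep hL4 h1 h2 hij]
  simp
  ring

lemma L_one (hmeas : ∀ i, Measurable (X i))
    (hindep : iIndepFun X ℙ)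
    (hL4 : ∀ i, MemLp (X i) 4 ℙ)
    (h1 : ∀ i, ∫ ω, X i ω ∂ℙ = 0) (h2 : ∀ i, ∫ ω, (X i ω)^2 ∂ℙ = v)
    (h3 : ∀ i, ∫ ω, (X i ω)^3 ∂ℙ = w) (h4 : ∀ i, ∫ ω, (X i ω)^4 ∂ℙ = κ*v^2)
    {a b c : Fin p} (hab : a ≠ b) (hac : a ≠ c) (hbc : b ≠ c) :
    ∫ ω, ((X a ω - X c ω)^2 - 2*v) * ((X b ω - X c ω)^2 - 2*v) ∂ℙ
      = (κ-1)*v^2 := by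
  have hA : MemLp (fun ω => X a ω - X c ω) 4 ℙ := (hL4 a).sub (hL4 c)
  have hB : MemLp (fun ω => X b ω - X c ω) 4 ℙ := (hL4 b).sub (hL4 c)
  have hA2 : Integrable (fun ω => (X a ω - X c ω)^2) ℙ := aux_pow_int hA (by norm_num)
  have hB2 : Integrable (fun ω => (X b ω - X c ω)^2) ℙ := aux_pow_int hB (by norm_num)
  have hAB : Integrable (fun ω => (X a ω - X c ω)^2 * (X b ω - X c ω)^2) ℙ := by
    have := (aux_mul_l2 hA hB).integrable_sq
    exact this.congr (Filter.Eventually.of_forall fun ω => by simp; ring)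
  have key : (fun ω => ((X a ω - X c ω)^2 - 2*v) * ((X b ω - X c ω)^2 - 2*v))
      = fun ω => (((X a ω - X c ω)^2 * (X b ω - X c ω)^2
          - (2*v) * (X a ω - X c ω)^2) - (2*v) * (X b ω - X c ω)^2) + 4*v^2 := by
    funext ω; ring
  have hI1 : Integrable (fun ω => (X a ω - X c ω)^2 * (X b ω - X c ω)^2
      - (2*v) * (X a ω - X c ω)^2) ℙ := hAB.sub (hA2.const_mul _)
  have hI2 : Integrable (fun ω => ((X a ω - X c ω)^2 * (X b ω - X c ω)^2
      - (2*v) * (X a ω - X c ω)^2) - (2*v) * (X b ω - X c ω)^2) ℙ := hI1.sub (hB2.const_mul _)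
  rw [key, integral_add hI2 (integrable_const _),
    integral_sub hI1 (hB2.const_mul _),
    integral_sub hAB (hA2.const_mul _), integral_const_mul, integral_const_mul,
    L_AB2 hmeas hindep hL4 h1 h2 h3 h4 hab hac hbc,
    L_var hmeas hindep hL4 h1 h2 hac, L_var hmeas hindep hL4 h1 h2 hbc]
  simp
  ring

lemma L_disj (hmeas : ∀ i, Measurable (X i))
    (hindep : iIndepFun X ℙ)
    (hL4 : ∀ i, MemLp (X i) 4 ℙ)
    (h1 : ∀ i, ∫ ω, X i ω ∂ℙ = 0) (h2 : ∀ i, ∫ ω, (X i ω)^2 ∂ℙ = v)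
    {i j s t : Fin p} (his : i ≠ s) (hit : i ≠ t) (hjs : j ≠ s) (hjt : j ≠ t)
    (hij : i ≠ j) (hst : s ≠ t) :
    ∫ ω, ((X i ω - X j ω)^2 - 2*v) * ((X s ω - X t ω)^2 - 2*v) ∂ℙ = 0 := by
  have hφ : Measurable (fun q : ℝ × ℝ => (q.1 - q.2)^2 - 2*v) := by fun_prop
  have hind : IndepFun (fun ω => (X i ω - X j ω)^2 - 2*v)
      (fun ω => (X s ω - X t ω)^2 - 2*v) ℙ :=
    (hindep.indepFun_prodMk_prodMk hmeas i j s t his hit hjs hjt).comp hφ hφ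
  have h := hind.integral_fun_mul_eq_mul_integral
    ((((hmeas i).sub (hmeas j)).pow_const 2).sub measurable_const).aestronglyMeasurable
    ((((hmeas s).sub (hmeas t)).pow_const 2).sub measurable_const).aestronglyMeasurable
  have h2' : ∫ ω, ((X i ω - X j ω)^2 - 2*v) * ((X s ω - X t ω)^2 - 2*v) ∂ℙ
      = (∫ ω, ((X i ω - X j ω)^2 - 2*v) ∂ℙ) * ∫ ω, ((X s ω - X t ω)^2 - 2*v) ∂ℙ := h
  rw [h2', L_mean hmeas hindep hL4 h1 h2 hij, L_mean hmeas hindep hL4 h1 h2 hst]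
  simp
end Cases

section Count
variable {p : ℕ}

lemma cfilt (a : Fin p) : (Finset.univ.filter (fun t => a < t)).card = p - 1 - a.val := by
  rw [show Finset.univ.filter (fun t => a < t) = Finset.Ioi a from by ext t; simp]
  exact Fin.card_Ioi a

lemma cfilt' (a : Fin p) : (Finset.univ.filter (fun t => t < a)).card = a.val := by
  rw [show Finset.univ.filter (fun t => t < a) = Finset.Iio a from by ext t; simp]
  exact Fin.card_Iio a

lemma hS1 (x : Fin p) :
    (∑ s : Fin p, ∑ _t ∈ Finset.univ.filter (fun t => s < t), (if x = s then (1:ℝ) else 0))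
      = (p:ℝ) - 1 - x.val := by
  have e1 : ∀ s : Fin p,
      (∑ _t ∈ Finset.univ.filter (fun t => s < t), (if x = s then (1:ℝ) else 0))
        = (if x = s then ((p - 1 - s.val : ℕ):ℝ) else 0) := by
    intro s
    rw [Finset.sum_const, cfilt, nsmul_eq_mul]
    split <;> simp
  rw [Finset.sum_congr rfl fun s _ => e1 s, Finset.sum_ite_eq]
  have hx := x.2
  simp only [Finset.mem_univ, if_true]
  rw [Nat.cast_sub (by omega), Nat.cast_sub (by omega)]
  norm_num

lemma hS2 (x : Fin p) :
    (∑ s : Fin p, ∑ t ∈ Finset.univ.filter (fun t => s < t), (if x = t then (1:ℝ) else 0))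
      = (x.val : ℝ) := by
  have e1 : ∀ s : Fin p,
      (∑ t ∈ Finset.univ.filter (fun t => s < t), (if x = t then (1:ℝ) else 0))
        = (if s < x then (1:ℝ) else 0) := by
    intro s
    rw [Finset.sum_ite_eq]
    simp [Finset.mem_filter]
  rw [Finset.sum_congr rfl fun s _ => e1 s, Finset.sum_boole, cfilt']

lemma hSp {i j : Fin p} (hij : i < j) :
    (∑ s : Fin p, ∑ t ∈ Finset.univ.filter (fun t => s < t),
      ((if j = t then (1:ℝ) else 0) * (if i = s then (1:ℝ) else 0))) = 1 := by
  have e1 : ∀ s : Fin p,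
      (∑ t ∈ Finset.univ.filter (fun t => s < t),
        ((if j = t then (1:ℝ) else 0) * (if i = s then (1:ℝ) else 0)))
        = (if s < j then (1:ℝ) else 0) * (if i = s then (1:ℝ) else 0) := by
    intro s
    rw [← Finset.sum_mul, Finset.sum_ite_eq]
    congr 1
    simp [Finset.mem_filter]
  rw [Finset.sum_congr rfl fun s _ => e1 s]
  simp only [mul_ite, mul_one, mul_zero]
  rw [Finset.sum_ite_eq]
  simp [hij]

lemma gauss (hp : 1 ≤ p) : (∑ i : Fin p, (i.val:ℝ)) * 2 = p * ((p:ℝ)-1) := by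
  have h := congrArg (Nat.cast : ℕ → ℝ) (Finset.sum_range_id_mul_two p)
  push_cast [Nat.cast_sub hp] at h
  rw [Fin.sum_univ_eq_sum_range (fun i => ((i:ℕ):ℝ)) p]
  exact h

lemma hNp' (hp : 1 ≤ p) : (∑ i : Fin p, ((p - 1 - i.val : ℕ):ℝ)) = p * ((p:ℝ)-1)/2 := by
  have e : ∀ i : Fin p, ((p - 1 - i.val : ℕ):ℝ) = ((p:ℝ)-1) - i.val := by
    intro i
    have := i.2
    rw [Nat.cast_sub (by omega), Nat.cast_sub (by omega)]
    norm_num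
  rw [Finset.sum_congr rfl fun i _ => e i, Finset.sum_sub_distrib, Finset.sum_const,
    Finset.card_univ, Fintype.card_fin, nsmul_eq_mul]
  have := gauss hp
  linarith

end Count

theorem stmt_8 {Ω : Type*} [MeasureSpace Ω] [IsProbabilityMeasure (ℙ : Measure Ω)]
    (p : ℕ) (hp : 2 ≤ p)
    (Y : Fin p → Ω → ℝ) (hmeas : ∀ i, Measurable (Y i))
    (hindep : iIndepFun Y ℙ)
    (hident : ∀ i, IdentDistrib (Y i) (Y ⟨0, by omega⟩) ℙ ℙ)
    (hL4 : MemLp (Y ⟨0, by omega⟩) 4 ℙ)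
    (m v κ : ℝ) (hm : ∫ ω, Y ⟨0, by omega⟩ ω ∂ℙ = m)
    (hv : ∫ ω, (Y ⟨0, by omega⟩ ω - m) ^ 2 ∂ℙ = v)
    (hκ : ∫ ω, (Y ⟨0, by omega⟩ ω - m) ^ 4 ∂ℙ = κ * v ^ 2) :
    ∑ i : Fin p, ∑ j ∈ Finset.univ.filter (fun j => i < j),
      ∑ s : Fin p, ∑ t ∈ Finset.univ.filter (fun t => s < t),
        ∫ ω, ((Y i ω - Y j ω) ^ 2 - 2 * v) * ((Y s ω - Y t ω) ^ 2 - 2 * v) ∂ℙ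
      = p * (p - 1) ^ 2 * (κ - 1 + 2 / ((p : ℝ) - 1)) * v ^ 2 := by
  classical
  set z0 : Fin p := ⟨0, by omega⟩ with hz0
  set X : Fin p → Ω → ℝ := fun i ω => Y i ω - m with hXdef
  have hXmeas : ∀ i, Measurable (X i) := fun i => (hmeas i).sub measurable_const
  have hXindep : iIndepFun X ℙ :=
    hindep.comp (fun _ x => x - m) (fun _ => measurable_id.sub measurable_const)
  have hXident : ∀ i, IdentDistrib (X i) (X z0) ℙ ℙ :=
    fun i => (hident i).comp (measurable_id.sub measurable_const)
  have hX0L4 : MemLp (X z0) 4 ℙ := hL4.sub (memLp_const m)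
  have hXL4 : ∀ i, MemLp (X i) 4 ℙ := fun i => (hXident i).symm.memLp_snd hX0L4
  have hint0 : Integrable (Y z0) ℙ := hL4.integrable (by norm_num)
  have hmom : ∀ (k : ℕ) (i : Fin p), ∫ ω, (X i ω)^k ∂ℙ = ∫ ω, (X z0 ω)^k ∂ℙ :=
    fun k i => ((hXident i).comp (measurable_id.pow_const k)).integral_eq
  have hm' : ∫ ω, Y z0 ω ∂ℙ = m := hm
  have h1 : ∀ i, ∫ ω, X i ω ∂ℙ = 0 := by
    intro i
    have hk := hmom 1 i
    simp only [pow_one] at hk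
    rw [hk]
    calc ∫ ω, X z0 ω ∂ℙ = (∫ ω, Y z0 ω ∂ℙ) - ∫ _ω, m ∂ℙ :=
          integral_sub hint0 (integrable_const m)
      _ = 0 := by rw [hm']; simp
  have h2 : ∀ i, ∫ ω, (X i ω)^2 ∂ℙ = v := fun i => by rw [hmom 2 i]; exact hv
  set w : ℝ := ∫ ω, (X z0 ω)^3 ∂ℙ with hw
  have h3 : ∀ i, ∫ ω, (X i ω)^3 ∂ℙ = w := fun i => hmom 3 i
  have h4 : ∀ i, ∫ ω, (X i ω)^4 ∂ℙ = κ*v^2 := fun i => by rw [hmom 4 i]; exact hκ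
  -- the key pointwise evaluation of each integral
  have key : ∀ i j s t : Fin p, i < j → s < t →
      (∫ ω, ((Y i ω - Y j ω)^2 - 2*v) * ((Y s ω - Y t ω)^2 - 2*v) ∂ℙ)
      = (κ-1)*v^2*((if i = s then (1:ℝ) else 0) + (if i = t then (1:ℝ) else 0)
          + (if j = s then (1:ℝ) else 0) + (if j = t then (1:ℝ) else 0))
        + 4*v^2*((if j = t then (1:ℝ) else 0) * (if i = s then (1:ℝ) else 0)) := by
    intro i j s t hij hst
    have hYX : (∫ ω, ((Y i ω - Y j ω)^2 - 2*v) * ((Y s ω - Y t ω)^2 - 2*v) ∂ℙ)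
        = ∫ ω, ((X i ω - X j ω)^2 - 2*v) * ((X s ω - X t ω)^2 - 2*v) ∂ℙ := by
      congr 1
      funext ω
      simp only [hXdef]
      ring
    rw [hYX]
    by_cases his : i = s
    · subst his
      by_cases hjt : j = t
      · subst hjt
        rw [L_eq hXmeas hXindep hXL4 h1 h2 h3 h4 hij.ne]
        simp [hij.ne, hij.ne']
        all_goals ring
      · have hr : (fun ω => ((X i ω - X j ω)^2 - 2*v) * ((X i ω - X t ω)^2 - 2*v))
            = fun ω => ((X j ω - X i ω)^2 - 2*v) * ((X t ω - X i ω)^2 - 2*v) :=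
          funext fun ω => by ring
        rw [hr, L_one hXmeas hXindep hXL4 h1 h2 h3 h4 hjt hij.ne' hst.ne']
        simp [hst.ne, hij.ne', hjt]
        all_goals ring
    · by_cases hit : i = t
      · subst hit
        have hr : (fun ω => ((X i ω - X j ω)^2 - 2*v) * ((X s ω - X i ω)^2 - 2*v))
            = fun ω => ((X j ω - X i ω)^2 - 2*v) * ((X s ω - X i ω)^2 - 2*v) :=
          funext fun ω => by ring
        rw [hr, L_one hXmeas hXindep hXL4 h1 h2 h3 h4 (lt_trans hst hij).ne' hij.ne' hst.ne]
        simp [his, hij.ne', (lt_trans hst hij).ne', hst.ne']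
        all_goals ring
      · by_cases hjs : j = s
        · subst hjs
          have hr : (fun ω => ((X i ω - X j ω)^2 - 2*v) * ((X j ω - X t ω)^2 - 2*v))
              = fun ω => ((X i ω - X j ω)^2 - 2*v) * ((X t ω - X j ω)^2 - 2*v) :=
            funext fun ω => by ring
          rw [hr, L_one hXmeas hXindep hXL4 h1 h2 h3 h4 hit hij.ne hst.ne']
          simp [hij.ne, hit, hst.ne]
          all_goals ring
        · by_cases hjt : j = t
          · subst hjt
            rw [L_one hXmeas hXindep hXL4 h1 h2 h3 h4 his hij.ne hst.ne]
            simp [his, hij.ne, hst.ne']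
            all_goals ring
          · rw [L_disj hXmeas hXindep hXL4 h1 h2 his hit hjs hjt hij.ne hst.ne]
            simp [his, hit, hjs, hjt]
  -- inner double-sum evaluation
  have inner1 : ∀ i j : Fin p, i < j →
      (∑ s : Fin p, ∑ t ∈ Finset.univ.filter (fun t => s < t),
        ((κ-1)*v^2*((if i = s then (1:ℝ) else 0) + (if i = t then (1:ℝ) else 0)
          + (if j = s then (1:ℝ) else 0) + (if j = t then (1:ℝ) else 0))
        + 4*v^2*((if j = t then (1:ℝ) else 0) * (if i = s then (1:ℝ) else 0))))
      = (κ-1)*v^2*(2*((p:ℝ)-1)) + 4*v^2 := by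
    intro i j hij
    have expand : ∀ s : Fin p, ∀ t : Fin p,
        ((κ-1)*v^2*((if i = s then (1:ℝ) else 0) + (if i = t then (1:ℝ) else 0)
          + (if j = s then (1:ℝ) else 0) + (if j = t then (1:ℝ) else 0))
        + 4*v^2*((if j = t then (1:ℝ) else 0) * (if i = s then (1:ℝ) else 0)))
        = (κ-1)*v^2*(if i = s then (1:ℝ) else 0)
          + ((κ-1)*v^2*(if i = t then (1:ℝ) else 0)
          + ((κ-1)*v^2*(if j = s then (1:ℝ) else 0)
          + ((κ-1)*v^2*(if j = t then (1:ℝ) else 0)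
          + 4*v^2*((if j = t then (1:ℝ) else 0) * (if i = s then (1:ℝ) else 0))))) :=
      fun s t => by ring
    rw [Finset.sum_congr rfl fun s _ => Finset.sum_congr rfl fun t _ => expand s t]
    simp only [Finset.sum_add_distrib, ← Finset.mul_sum]
    rw [hS1 i, hS2 i, hS1 j, hS2 j, hSp hij]
    ring
  have step1 : (∑ i : Fin p, ∑ j ∈ Finset.univ.filter (fun j => i < j),
      ∑ s : Fin p, ∑ t ∈ Finset.univ.filter (fun t => s < t),
        ∫ ω, ((Y i ω - Y j ω) ^ 2 - 2 * v) * ((Y s ω - Y t ω) ^ 2 - 2 * v) ∂ℙ)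
      = ∑ i : Fin p, ∑ j ∈ Finset.univ.filter (fun j => i < j),
          ((κ-1)*v^2*(2*((p:ℝ)-1)) + 4*v^2) :=
    Finset.sum_congr rfl fun i _ => Finset.sum_congr rfl fun j hj => by
      rw [Finset.sum_congr rfl fun s _ => Finset.sum_congr rfl fun t ht =>
        key i j s t (Finset.mem_filter.mp hj).2 (Finset.mem_filter.mp ht).2]
      exact inner1 i j (Finset.mem_filter.mp hj).2
  rw [step1]
  have step2 : ∀ i : Fin p, (∑ _j ∈ Finset.univ.filter (fun j => i < j),
      ((κ-1)*v^2*(2*((p:ℝ)-1)) + 4*v^2))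
      = ((p - 1 - i.val : ℕ):ℝ) * ((κ-1)*v^2*(2*((p:ℝ)-1)) + 4*v^2) := by
    intro i
    rw [Finset.sum_const, cfilt, nsmul_eq_mul]
  rw [Finset.sum_congr rfl fun i _ => step2 i, ← Finset.sum_mul, hNp' (by omega)]
  have hp1 : (p:ℝ) - 1 ≠ 0 := by
    have : (2:ℝ) ≤ (p:ℝ) := by exact_mod_cast hp
    intro h
    nlinarith
  field_simp
  ring
end

section
/- For any estimator θ̂ : ℝⁿ → ℝ, any variance v > 0 and any η > 0, there exists a mean m ∈ {-η, η} such that, for an i.i.d. sample (Y_i)_{i=1}^n from the Gaussian N(m, v), either P(θ̂(Y) ≥ m + η) ≥ P(M ≥ m + η) or P(θ̂(Y) ≤ m - η) ≥ P(M ≤ m - η), where M = (1/n)Σ Y_i is the empirical mean. -/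
open MeasureTheory ProbabilityTheory Real

open scoped ENNReal NNReal

section Aux

variable {n : ℕ}

/-- Fubini for products of functions over a finite product measure, lintegral version. -/
lemma lintegral_pi_prod_aux (μ : Fin n → Measure ℝ) [∀ i, SigmaFinite (μ i)]
    (g : Fin n → ℝ → ℝ≥0∞) (hg : ∀ i, Measurable (g i)) :
    ∫⁻ x, ∏ i, g i (x i) ∂Measure.pi μ = ∏ i, ∫⁻ y, g i y ∂μ i := by
  classical
  have hF : Measurable fun x : Fin n → ℝ => ∏ i, g i (x i) :=
    Finset.measurable_prod _ fun i _ => (hg i).comp (measurable_pi_apply i)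
  have key : ∀ s : Finset (Fin n), ∀ x : Fin n → ℝ,
      (∫⋯∫⁻_s, (fun x => ∏ i, g i (x i)) ∂μ) x
        = (∏ i ∈ s, ∫⁻ y, g i y ∂μ i) * ∏ i ∈ sᶜ, g i (x i) := by
    intro s
    induction s using Finset.induction with
    | empty => intro x; simp
    | @insert i s hi ih =>
      intro x
      rw [lmarginal_insert _ hF hi]
      have hisc : i ∈ sᶜ := Finset.mem_compl.mpr hi
      have hprod : ∀ y : ℝ, ∏ j ∈ sᶜ, g j (Function.update x i y j)
          = g i y * ∏ j ∈ sᶜ.erase i, g j (x j) := by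
        intro y
        rw [← Finset.mul_prod_erase _ _ hisc]
        congr 1
        · simp
        · refine Finset.prod_congr rfl fun j hj => ?_
          rw [Function.update_of_ne (Finset.ne_of_mem_erase hj)]
      simp_rw [ih, hprod]
      rw [lintegral_const_mul _ ((hg i).mul_const _), lintegral_mul_const _ (hg i),
        Finset.prod_insert hi, Finset.compl_insert]
      ring
  rw [lintegral_eq_lmarginal_univ (fun _ => (0:ℝ)), key]
  simp

lemma pi_gaussian_withDensity (m : ℝ) (κ : ℝ≥0) (hκ : κ ≠ 0) :
    (Measure.pi fun _ : Fin n => gaussianReal m κ)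
      = (Measure.pi fun _ : Fin n => (volume : Measure ℝ)).withDensity
          (fun x => ∏ i, gaussianPDF m κ (x i)) := by
  refine Measure.pi_eq fun s hs => ?_
  rw [withDensity_apply _ (MeasurableSet.univ_pi hs),
    ← lintegral_indicator (MeasurableSet.univ_pi hs)]
  have hind : ∀ x : Fin n → ℝ,
      (Set.univ.pi s).indicator (fun x => ∏ i, gaussianPDF m κ (x i)) x
        = ∏ i, (s i).indicator (gaussianPDF m κ) (x i) := by
    intro x
    by_cases hx : x ∈ Set.univ.pi s
    · rw [Set.indicator_of_mem hx]
      refine Finset.prod_congr rfl fun i _ => ?_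
      rw [Set.indicator_of_mem (hx i (Set.mem_univ i))]
    · rw [Set.indicator_of_notMem hx]
      obtain ⟨i, hi⟩ : ∃ i, x i ∉ s i := by
        by_contra h
        push_neg at h
        exact hx fun i _ => h i
      exact (Finset.prod_eq_zero (Finset.mem_univ i)
        (Set.indicator_of_notMem hi _)).symm
  simp_rw [hind]
  rw [lintegral_pi_prod_aux _ _ fun i => (measurable_gaussianPDF m κ).indicator (hs i)]
  refine Finset.prod_congr rfl fun i _ => ?_
  rw [lintegral_indicator (hs i), gaussianReal_apply m hκ]

/-- Monotone likelihood ratio: on `{x | 0 ≤ η * ∑ x i}`, the density of the product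
Gaussian with mean `η` dominates the one with mean `-η`. -/
lemma prod_gaussianPDF_le {v : ℝ} (hv : 0 < v) (η : ℝ) (x : Fin n → ℝ)
    (hs : 0 ≤ η * ∑ i, x i) :
    ∏ i, gaussianPDF (-η) v.toNNReal (x i) ≤ ∏ i, gaussianPDF η v.toNNReal (x i) := by
  have hvc : (v.toNNReal : ℝ) = v := Real.coe_toNNReal v hv.le
  simp only [gaussianPDF]
  rw [← ENNReal.ofReal_prod_of_nonneg fun i _ => gaussianPDFReal_nonneg _ _ _,
    ← ENNReal.ofReal_prod_of_nonneg fun i _ => gaussianPDFReal_nonneg _ _ _]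
  refine ENNReal.ofReal_le_ofReal ?_
  simp only [gaussianPDFReal, hvc]
  rw [Finset.prod_mul_distrib, Finset.prod_mul_distrib, Finset.prod_const,
    ← Real.exp_sum, ← Real.exp_sum]
  refine mul_le_mul_of_nonneg_left (Real.exp_le_exp.mpr ?_) (by positivity)
  rw [← sub_nonneg, ← Finset.sum_sub_distrib]
  have heq : ∀ i : Fin n, -(x i - η) ^ 2 / (2 * v) - -(x i - -η) ^ 2 / (2 * v)
      = 2 / v * (η * x i) := by
    intro i
    field_simp
    ring
  simp_rw [heq]
  rw [← Finset.mul_sum, ← Finset.mul_sum]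
  exact mul_nonneg (by positivity) hs

end Aux

theorem stmt_9 (n : ℕ) (hn : 0 < n)
    (θhat : (Fin n → ℝ) → ℝ) (hθhat : Measurable θhat)
    (v : ℝ) (hv : 0 < v) (η : ℝ) (hη : 0 < η) :
    ∃ m ∈ ({-η, η} : Set ℝ),
      (Measure.pi fun _ : Fin n => gaussianReal m v.toNNReal)
          {y | m + η ≤ θhat y}
        ≥ (Measure.pi fun _ : Fin n => gaussianReal m v.toNNReal)
          {y | m + η ≤ (∑ i, y i) / n} ∨
      (Measure.pi fun _ : Fin n => gaussianReal m v.toNNReal)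
          {y | θhat y ≤ m - η}
        ≥ (Measure.pi fun _ : Fin n => gaussianReal m v.toNNReal)
          {y | (∑ i, y i) / n ≤ m - η} := by
  classical
  set κ : ℝ≥0 := v.toNNReal with hκdef
  have hκ : κ ≠ 0 := (Real.toNNReal_pos.mpr hv).ne'
  set P₁ : Measure (Fin n → ℝ) := Measure.pi fun _ : Fin n => gaussianReal (-η) κ with hP₁
  set P₂ : Measure (Fin n → ℝ) := Measure.pi fun _ : Fin n => gaussianReal η κ with hP₂
  have hsum : Measurable fun x : Fin n → ℝ => ∑ i, x i :=
    Finset.measurable_sum Finset.univ fun i _ => measurable_pi_apply i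
  set A : Set (Fin n → ℝ) := {x | 0 ≤ θhat x} with hAdef
  set B : Set (Fin n → ℝ) := {x | 0 ≤ ∑ i, x i} with hBdef
  have hA : MeasurableSet A := measurableSet_le measurable_const hθhat
  have hB : MeasurableSet B := measurableSet_le measurable_const hsum
  -- domination on B and Bᶜ
  have h12 : ∀ S : Set (Fin n → ℝ), MeasurableSet S → S ⊆ B → P₁ S ≤ P₂ S := by
    intro S hS hSB
    rw [hP₁, hP₂, pi_gaussian_withDensity _ _ hκ, pi_gaussian_withDensity _ _ hκ,
      withDensity_apply _ hS, withDensity_apply _ hS]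
    refine setLIntegral_mono
      (Finset.measurable_prod _ fun i _ =>
        (measurable_gaussianPDF η κ).comp (measurable_pi_apply i)) fun x hx => ?_
    exact prod_gaussianPDF_le hv η x (mul_nonneg hη.le (hSB hx))
  have h21 : ∀ S : Set (Fin n → ℝ), MeasurableSet S → S ⊆ Bᶜ → P₂ S ≤ P₁ S := by
    intro S hS hSB
    rw [hP₁, hP₂, pi_gaussian_withDensity _ _ hκ, pi_gaussian_withDensity _ _ hκ,
      withDensity_apply _ hS, withDensity_apply _ hS]
    refine setLIntegral_mono
      (Finset.measurable_prod _ fun i _ =>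
        (measurable_gaussianPDF (-η) κ).comp (measurable_pi_apply i)) fun x hx => ?_
    have hxB : ¬ (0 ≤ ∑ i, x i) := hSB hx
    have hneg : 0 ≤ (-η) * ∑ i, x i := by nlinarith [not_le.mp hxB]
    simpa using prod_gaussianPDF_le hv (-η) x hneg
  -- Neyman-Pearson style inequality
  have key : P₁ B + P₂ Bᶜ ≤ P₁ A + P₂ Aᶜ := by
    have e1 : P₁ A = P₁ (A ∩ B) + P₁ (A \ B) := (measure_inter_add_diff A hB).symm
    have e2 : P₂ Aᶜ = P₂ (Aᶜ ∩ B) + P₂ (Aᶜ \ B) := (measure_inter_add_diff Aᶜ hB).symm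
    have e3 : P₁ B = P₁ (B ∩ A) + P₁ (B \ A) := (measure_inter_add_diff B hA).symm
    have e4 : P₂ Bᶜ = P₂ (Bᶜ ∩ A) + P₂ (Bᶜ \ A) := (measure_inter_add_diff Bᶜ hA).symm
    have i1 : P₁ (B \ A) ≤ P₂ (B \ A) := h12 _ (hB.diff hA) Set.diff_subset
    have i2 : P₂ (Bᶜ ∩ A) ≤ P₁ (Bᶜ ∩ A) := h21 _ (hB.compl.inter hA) Set.inter_subset_left
    have s1 : B \ A = Aᶜ ∩ B := by ext x; simp [Set.mem_diff, and_comm]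
    have s2 : Bᶜ \ A = Aᶜ \ B := by
      ext x; simp only [Set.mem_diff, Set.mem_compl_iff]; tauto
    have s3 : Bᶜ ∩ A = A \ B := by
      ext x; simp only [Set.mem_inter_iff, Set.mem_diff, Set.mem_compl_iff]; tauto
    have s4 : B ∩ A = A ∩ B := Set.inter_comm _ _
    calc P₁ B + P₂ Bᶜ = (P₁ (A ∩ B) + P₁ (B \ A)) + (P₂ (Bᶜ ∩ A) + P₂ (Aᶜ \ B)) := by
          rw [e3, e4, s4, s2]
      _ ≤ (P₁ (A ∩ B) + P₂ (B \ A)) + (P₁ (Bᶜ ∩ A) + P₂ (Aᶜ \ B)) := by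
          gcongr
      _ = (P₁ (A ∩ B) + P₁ (A \ B)) + (P₂ (Aᶜ ∩ B) + P₂ (Aᶜ \ B)) := by
          rw [s1, s3]; ring
      _ = P₁ A + P₂ Aᶜ := by rw [← e1, ← e2]
  -- the boundary hyperplane is null
  have hnull : P₂ {x : Fin n → ℝ | ∑ i, x i = 0} = 0 := by
    have hvol : (volume : Measure (Fin n → ℝ)) {x : Fin n → ℝ | ∑ i, x i = 0} = 0 := by
      set L : (Fin n → ℝ) →ₗ[ℝ] ℝ := ∑ i, LinearMap.proj i with hL
      have hLapp : ∀ x : Fin n → ℝ, L x = ∑ i, x i := by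
        intro x; simp [hL]
      have hker : LinearMap.ker L ≠ ⊤ := by
        intro h
        have h0 : L = 0 := LinearMap.ker_eq_top.mp h
        have : L (fun _ => (1:ℝ)) = (n : ℝ) := by rw [hLapp]; simp
        rw [h0] at this
        simp only [LinearMap.zero_apply] at this
        have : (n : ℝ) ≠ 0 := Nat.cast_ne_zero.mpr hn.ne'
        simp_all
      have hseteq : {x : Fin n → ℝ | ∑ i, x i = 0} = (LinearMap.ker L : Set (Fin n → ℝ)) := by
        ext x; simp [LinearMap.mem_ker, hLapp]
      rw [hseteq]
      exact Measure.addHaar_submodule volume _ hker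
    rw [hP₂, pi_gaussian_withDensity _ _ hκ]
    refine withDensity_absolutelyContinuous _ _ ?_
    rwa [← volume_pi]
  have hBle : P₂ {x : Fin n → ℝ | ∑ i, x i ≤ 0} = P₂ Bᶜ := by
    have hmono : Bᶜ ⊆ {x : Fin n → ℝ | ∑ i, x i ≤ 0} := by
      intro x hx
      simp only [Set.mem_compl_iff, hBdef, Set.mem_setOf_eq] at hx
      exact (not_le.mp hx).le
    refine le_antisymm ?_ (measure_mono hmono)
    have hsub : {x : Fin n → ℝ | ∑ i, x i ≤ 0} ⊆ Bᶜ ∪ {x : Fin n → ℝ | ∑ i, x i = 0} := by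
      intro x hx
      simp only [Set.mem_setOf_eq] at hx
      rcases hx.lt_or_eq with h | h
      · exact Or.inl (not_le.mpr h)
      · exact Or.inr h
    calc P₂ {x : Fin n → ℝ | ∑ i, x i ≤ 0}
        ≤ P₂ (Bᶜ ∪ {x : Fin n → ℝ | ∑ i, x i = 0}) := measure_mono hsub
      _ ≤ P₂ Bᶜ + P₂ {x : Fin n → ℝ | ∑ i, x i = 0} := measure_union_le _ _
      _ = P₂ Bᶜ := by rw [hnull, add_zero]
  -- assemble
  by_contra hcon
  push_neg at hcon
  have hn' : (0:ℝ) < (n:ℝ) := Nat.cast_pos.mpr hn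
  obtain ⟨hc1, -⟩ := hcon (-η) (Or.inl rfl)
  obtain ⟨-, hc2⟩ := hcon η (Or.inr rfl)
  rw [neg_add_cancel] at hc1
  rw [sub_self] at hc2
  have hsetB : {y : Fin n → ℝ | 0 ≤ (∑ i, y i) / (n:ℝ)} = B := by
    ext y
    simp only [hBdef, Set.mem_setOf_eq]
    rw [le_div_iff₀ hn', zero_mul]
  have hsetB' : {y : Fin n → ℝ | (∑ i, y i) / (n:ℝ) ≤ 0} = {x : Fin n → ℝ | ∑ i, x i ≤ 0} := by
    ext y
    simp only [Set.mem_setOf_eq]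
    rw [div_le_iff₀ hn', zero_mul]
  rw [hsetB] at hc1
  rw [hsetB', hBle] at hc2
  have hc1' : P₁ A < P₁ B := by
    refine lt_of_le_of_lt (measure_mono ?_) hc1
    intro x hx; exact hx
  have hc2' : P₂ Aᶜ < P₂ Bᶜ := by
    refine lt_of_le_of_lt (measure_mono ?_) hc2
    intro x hx
    simp only [Set.mem_compl_iff, hAdef, Set.mem_setOf_eq] at hx
    exact (not_le.mp hx).le
  exact absurd (key.trans_lt (ENNReal.add_lt_add hc1' hc2')) (lt_irrefl _)
end

section
/- For any v > 0, n ≥ 1 and η > 0 with v ≤ n²η², there exists a probability distribution on ℝ with mean 0 and variance v such that the empirical mean M of an i.i.d. sample of size n from it satisfies P(M ≥ η) ≥ (v/(2nη²))(1 - v/(n²η²))^{n-1}. -/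
open MeasureTheory ProbabilityTheory Real

private lemma my_integrable_dirac (f : ℝ → ℝ) (a : ℝ) :
    Integrable f (Measure.dirac a) := by
  have h : f =ᵐ[Measure.dirac a] fun _ => f a := by
    rw [MeasureTheory.ae_dirac_eq]; exact Filter.eventually_pure.mpr rfl
  exact (integrable_const (f a)).congr h.symm

theorem stmt_10 (v : ℝ) (hv : 0 < v) (n : ℕ) (hn : 1 ≤ n) (η : ℝ) (hη : 0 < η)
    (hvn : v ≤ n ^ 2 * η ^ 2) :
    ∃ μ : Measure ℝ, IsProbabilityMeasure μ ∧
      (∫ x, x ∂μ) = 0 ∧ (∫ x, x ^ 2 ∂μ) = v ∧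
      (Measure.pi fun _ : Fin n => μ) {y | η ≤ (∑ i, y i) / n}
        ≥ ENNReal.ofReal
            (v / (2 * n * η ^ 2) * (1 - v / (n ^ 2 * η ^ 2)) ^ (n - 1)) := by
  have hn0 : (0:ℝ) < n := by exact_mod_cast hn
  have hη0 : η ≠ 0 := hη.ne'
  set p : ℝ := v / (2 * (n:ℝ) ^ 2 * η ^ 2) with hp
  have hp0 : 0 < p := by positivity
  have hD : (0:ℝ) < 2 * (n:ℝ) ^ 2 * η ^ 2 := by positivity
  have hp2 : 2 * p ≤ 1 := by
    rw [hp, ← mul_div_assoc, div_le_one hD]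
    nlinarith
  have hq0 : 0 ≤ 1 - 2 * p := by linarith
  have hnη : (0:ℝ) < n * η := by positivity
  set μ : Measure ℝ := ENNReal.ofReal p • Measure.dirac ((n:ℝ) * η)
      + ENNReal.ofReal p • Measure.dirac (-((n:ℝ) * η))
      + ENNReal.ofReal (1 - 2 * p) • Measure.dirac 0 with hμ
  have hprob : IsProbabilityMeasure μ := by
    constructor
    simp only [hμ, Measure.add_apply, Measure.smul_apply, measure_univ, smul_eq_mul, mul_one]
    rw [← ENNReal.ofReal_add hp0.le hp0.le, ← ENNReal.ofReal_add (by linarith) hq0]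
    norm_num
    ring
  have hint1 : ∫ x, x ∂μ = 0 := by
    rw [hμ]
    rw [integral_add_measure, integral_add_measure, integral_smul_measure,
      integral_smul_measure, integral_smul_measure, integral_dirac, integral_dirac,
      integral_dirac]
    · rw [ENNReal.toReal_ofReal hp0.le, ENNReal.toReal_ofReal hq0]
      simp only [smul_eq_mul]
      ring
    · exact (my_integrable_dirac _ _).smul_measure ENNReal.ofReal_ne_top
    · exact (my_integrable_dirac _ _).smul_measure ENNReal.ofReal_ne_top
    · exact ((my_integrable_dirac _ _).smul_measure ENNReal.ofReal_ne_top).add_measure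
        ((my_integrable_dirac _ _).smul_measure ENNReal.ofReal_ne_top)
    · exact (my_integrable_dirac _ _).smul_measure ENNReal.ofReal_ne_top
  have hint2 : ∫ x, x ^ 2 ∂μ = v := by
    rw [hμ]
    rw [integral_add_measure, integral_add_measure, integral_smul_measure,
      integral_smul_measure, integral_smul_measure, integral_dirac, integral_dirac,
      integral_dirac]
    · rw [ENNReal.toReal_ofReal hp0.le, ENNReal.toReal_ofReal hq0]
      have h2 : p * ((n:ℝ) * η) ^ 2 + p * (-((n:ℝ) * η)) ^ 2 + (1 - 2*p) * 0 ^ 2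
          = 2 * p * ((n:ℝ)^2 * η^2) := by ring
      simp only [smul_eq_mul]
      rw [h2, hp]
      field_simp
    · exact (my_integrable_dirac _ _).smul_measure ENNReal.ofReal_ne_top
    · exact (my_integrable_dirac _ _).smul_measure ENNReal.ofReal_ne_top
    · exact ((my_integrable_dirac _ _).smul_measure ENNReal.ofReal_ne_top).add_measure
        ((my_integrable_dirac _ _).smul_measure ENNReal.ofReal_ne_top)
    · exact (my_integrable_dirac _ _).smul_measure ENNReal.ofReal_ne_top
  -- singleton measures
  have hne1 : (n:ℝ) * η ≠ -((n:ℝ) * η) := by nlinarith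
  have hne2 : (n:ℝ) * η ≠ 0 := hnη.ne'
  have hμa : μ {(n:ℝ) * η} = ENNReal.ofReal p := by
    simp only [hμ, Measure.add_apply, Measure.smul_apply, smul_eq_mul]
    rw [Measure.dirac_apply_of_mem (Set.mem_singleton _),
      Measure.dirac_apply' _ (measurableSet_singleton _),
      Measure.dirac_apply' _ (measurableSet_singleton _)]
    simp only [Set.indicator, Set.mem_singleton_iff]
    rw [if_neg (fun h => hne1 h.symm), if_neg (fun h => hne2 h.symm)]
    simp
  have hμ0 : μ {(0:ℝ)} = ENNReal.ofReal (1 - 2 * p) := by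
    simp only [hμ, Measure.add_apply, Measure.smul_apply, smul_eq_mul]
    rw [Measure.dirac_apply_of_mem (Set.mem_singleton _),
      Measure.dirac_apply' _ (measurableSet_singleton _),
      Measure.dirac_apply' _ (measurableSet_singleton _)]
    simp only [Set.indicator, Set.mem_singleton_iff]
    rw [if_neg hne2, if_neg (fun h => hne2 (by linarith [neg_eq_zero.mp h]))]
    simp
  refine ⟨μ, hprob, hint1, hint2, ?_⟩
  -- the main bound
  set e : Fin n → (Fin n → ℝ) := fun i j => if j = i then (n:ℝ) * η else 0 with he
  have hesum : ∀ i, (∑ j, e i j) = (n:ℝ) * η := by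
    intro i
    simp [he]
  have hmem : ∀ i, e i ∈ {y : Fin n → ℝ | η ≤ (∑ j, y j) / n} := by
    intro i
    simp only [Set.mem_setOf_eq, hesum i]
    rw [mul_comm, mul_div_assoc, div_self hn0.ne', mul_one]
  have hinj : Function.Injective e := by
    intro i j hij
    by_contra hne
    have h1 : e i i = (n:ℝ) * η := by simp [he]
    have h2 : e j i = 0 := by simp [he, hne]
    rw [hij, h2] at h1
    exact hne2 h1.symm
  have hsub : (⋃ i, {e i}) ⊆ {y : Fin n → ℝ | η ≤ (∑ j, y j) / n} := by
    intro y hy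
    simp only [Set.mem_iUnion, Set.mem_singleton_iff] at hy
    obtain ⟨i, rfl⟩ := hy
    exact hmem i
  have hsingle : ∀ i, (Measure.pi fun _ : Fin n => μ) {e i}
      = ENNReal.ofReal p * ENNReal.ofReal (1 - 2 * p) ^ (n - 1) := by
    intro i
    have hrepr : {e i} = Set.pi Set.univ (fun j => {e i j}) := (Set.univ_pi_singleton _).symm
    rw [hrepr, Measure.pi_pi]
    have hval : ∀ j, μ {e i j} = if j = i then ENNReal.ofReal p
        else ENNReal.ofReal (1 - 2 * p) := by
      intro j
      by_cases h : j = i <;> simp [he, h, hμa, hμ0]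
    simp_rw [hval]
    rw [← Finset.mul_prod_erase Finset.univ _ (Finset.mem_univ i)]
    rw [if_pos rfl]
    congr 1
    rw [Finset.prod_congr rfl (fun j hj => if_neg (Finset.ne_of_mem_erase hj)),
      Finset.prod_const, Finset.card_erase_of_mem (Finset.mem_univ i),
      Finset.card_univ, Fintype.card_fin]
  calc ENNReal.ofReal (v / (2 * n * η ^ 2) * (1 - v / (n ^ 2 * η ^ 2)) ^ (n - 1))
      = (n : ENNReal) * (ENNReal.ofReal p * ENNReal.ofReal (1 - 2 * p) ^ (n - 1)) := by
        rw [← ENNReal.ofReal_pow hq0, ← ENNReal.ofReal_mul hp0.le,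
          ← ENNReal.ofReal_natCast n, ← ENNReal.ofReal_mul (by positivity)]
        congr 1
        have h1 : v / (2 * (n:ℝ) * η ^ 2) = (n:ℝ) * p := by
          rw [hp]; field_simp
        have h2 : 1 - v / ((n:ℝ) ^ 2 * η ^ 2) = 1 - 2 * p := by
          rw [hp]; congr 1; field_simp
        rw [h1, h2]; ring
    _ = ∑ i : Fin n, (Measure.pi fun _ : Fin n => μ) {e i} := by
        simp only [hsingle, Finset.sum_const, Finset.card_univ, Fintype.card_fin,
          nsmul_eq_mul]
    _ = (Measure.pi fun _ : Fin n => μ) (⋃ i, {e i}) := by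
        rw [measure_iUnion ?_ (fun i => measurableSet_singleton _), tsum_fintype]
        intro i j hij
        simp only [Set.disjoint_singleton]
        exact fun h => hij (hinj h)
    _ ≤ (Measure.pi fun _ : Fin n => μ) {y | η ≤ (∑ j, y j) / n} := measure_mono hsub
end

section
/- Let n ≥ 1 and ε ∈ (0, 1/(2e)]. There exists a distribution with mean m and variance v such that the empirical mean M of an i.i.d. sample of size n satisfies, with probability at least 2ε, |M - m| ≥ sqrt(v/(2nε)) (1 - 2eε/n)^{(n-1)/2}. -/
open MeasureTheory ProbabilityTheory Real

set_option maxHeartbeats 1000000 in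
theorem stmt_11 (n : ℕ) (hn : 1 ≤ n) (ε : ℝ)
    (hε : ε ∈ Set.Ioc (0 : ℝ) (1 / (2 * Real.exp 1)))
    (m v : ℝ) (hv : 0 < v) :
    ∃ μ : Measure ℝ, IsProbabilityMeasure μ ∧
      (∫ x, x ∂μ) = m ∧ (∫ x, (x - m) ^ 2 ∂μ) = v ∧
      (Measure.pi fun _ : Fin n => μ)
          {y | Real.sqrt (v / (2 * n * ε))
                * (1 - 2 * Real.exp 1 * ε / n) ^ ((n - 1 : ℝ) / 2)
              ≤ |(∑ i, y i) / n - m|}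
        ≥ ENNReal.ofReal (2 * ε) := by
  obtain ⟨hε0, hε1⟩ := hε
  have he : (0:ℝ) < Real.exp 1 := Real.exp_pos 1
  have hn0 : (0:ℝ) < (n:ℝ) := by exact_mod_cast hn
  have hn1 : (1:ℝ) ≤ (n:ℝ) := by exact_mod_cast hn
  have h2eε : 2 * Real.exp 1 * ε ≤ 1 := by
    rw [le_div_iff₀ (by positivity)] at hε1
    linarith [hε1]
  set b : ℝ := 1 - 2 * Real.exp 1 * ε / n with hb_def
  have hb_ge : 1 - 1/(n:ℝ) ≤ b := by
    have h : 2 * Real.exp 1 * ε / n ≤ 1 / n := by gcongr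
    simp only [hb_def]; linarith
  have h1n : (0:ℝ) ≤ 1 - 1/(n:ℝ) := by
    have : 1/(n:ℝ) ≤ 1 := by rw [div_le_one hn0]; exact hn1
    linarith
  have hb0 : 0 ≤ b := le_trans h1n hb_ge
  have hb1 : b ≤ 1 := by
    have : 0 ≤ 2 * Real.exp 1 * ε / n := by positivity
    simp only [hb_def]; linarith
  set k : ℕ := n - 1 with hk_def
  have hk_cast : (k:ℝ) = (n:ℝ) - 1 := by
    simp only [hk_def]; push_cast [Nat.cast_sub hn]; ring
  set c : ℝ := b ^ k with hc_def
  -- c ≥ exp(-1)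
  have hc_lb : Real.exp (-1) ≤ c := by
    rcases Nat.eq_or_lt_of_le hn with h1 | h2
    · have hk0 : k = 0 := by omega
      simp only [hc_def, hk0, pow_zero]
      calc Real.exp (-1) ≤ Real.exp 0 := by
            apply Real.exp_le_exp.mpr; norm_num
        _ = 1 := Real.exp_zero
    · -- n ≥ 2, so k ≥ 1
      have hk1 : 1 ≤ k := by omega
      have hkR : (0:ℝ) < (k:ℝ) := by exact_mod_cast hk1
      have hstep : ((k:ℝ)+1)/(k:ℝ) ≤ Real.exp (1/(k:ℝ)) := by
        have := Real.add_one_le_exp (1/(k:ℝ))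
        calc ((k:ℝ)+1)/(k:ℝ) = 1/(k:ℝ) + 1 := by field_simp; ring
          _ ≤ Real.exp (1/(k:ℝ)) := this
      have hpow : (((k:ℝ)+1)/(k:ℝ))^k ≤ Real.exp 1 := by
        calc (((k:ℝ)+1)/(k:ℝ))^k ≤ (Real.exp (1/(k:ℝ)))^k :=
              pow_le_pow_left₀ (by positivity) hstep k
          _ = Real.exp ((k:ℝ) * (1/(k:ℝ))) := (Real.exp_nat_mul _ k).symm
          _ = Real.exp 1 := by rw [mul_one_div, div_self (ne_of_gt hkR)]
      have hfrac : ((k:ℝ)/((k:ℝ)+1))^k = ((((k:ℝ)+1)/(k:ℝ))^k)⁻¹ := by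
        rw [← inv_pow]
        congr 1
        rw [inv_div]
      have hbase_le : (k:ℝ)/((k:ℝ)+1) ≤ b := by
        have hkn : (k:ℝ) + 1 = (n:ℝ) := by rw [hk_cast]; ring
        have : (k:ℝ)/((k:ℝ)+1) = 1 - 1/(n:ℝ) := by
          rw [hkn, hk_cast]; field_simp
        linarith [hb_ge]
      calc Real.exp (-1) = (Real.exp 1)⁻¹ := by rw [Real.exp_neg]
        _ ≤ ((((k:ℝ)+1)/(k:ℝ))^k)⁻¹ := by
            apply inv_anti₀ (by positivity) hpow
        _ = ((k:ℝ)/((k:ℝ)+1))^k := hfrac.symm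
        _ ≤ b ^ k := pow_le_pow_left₀ (by positivity) hbase_le k
  have hc0 : 0 < c := lt_of_lt_of_le (Real.exp_pos _) hc_lb
  have hec : 1 ≤ Real.exp 1 * c := by
    calc (1:ℝ) = Real.exp 1 * Real.exp (-1) := by
          rw [← Real.exp_add]; norm_num
      _ ≤ Real.exp 1 * c := by gcongr
  set p : ℝ := ε / ((n:ℝ) * c) with hp_def
  have hp0 : 0 < p := by positivity
  have h2p_le : 2 * p ≤ 2 * Real.exp 1 * ε / n := by
    have hpe : 2 * p = (2*ε)/((n:ℝ)*c) := by rw [hp_def]; ring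
    rw [hpe, div_le_div_iff₀ (by positivity) hn0]
    nlinarith [mul_le_mul_of_nonneg_left hec (by positivity : (0:ℝ) ≤ 2*ε*(n:ℝ))]
  have hbp : b ≤ 1 - 2 * p := by
    simp only [hb_def]; linarith [h2p_le]
  have h2p1 : 2 * p ≤ 1 := by
    have h1 : 2 * Real.exp 1 * ε / n ≤ 1 / n := by gcongr
    have h2 : 1/(n:ℝ) ≤ 1 := by rw [div_le_one hn0]; exact hn1
    linarith
  have h12p : 0 ≤ 1 - 2 * p := by linarith
  -- η and a
  set η : ℝ := Real.sqrt (v / (2 * n * ε)) * b ^ ((n - 1 : ℝ) / 2) with hη_def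
  have hvn : 0 ≤ v / (2 * (n:ℝ) * ε) := by positivity
  have hb_pow : (b ^ (((n:ℝ) - 1) / 2)) ^ (2:ℕ) = c := by
    rw [← Real.rpow_natCast (b ^ (((n:ℝ) - 1) / 2)) 2, ← Real.rpow_mul hb0]
    have : ((n:ℝ) - 1) / 2 * (2:ℕ) = (k:ℝ) := by
      rw [hk_cast]; push_cast; ring
    rw [this, Real.rpow_natCast]
  have hη2 : η ^ 2 = v / (2 * (n:ℝ) * ε) * c := by
    rw [hη_def, mul_pow, Real.sq_sqrt hvn, hb_pow]
  have hη_nonneg : 0 ≤ η := by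
    apply mul_nonneg (Real.sqrt_nonneg _) (Real.rpow_nonneg hb0 _)
  have hη2_pos : 0 < η ^ 2 := by rw [hη2]; positivity
  have hη0 : 0 < η := by
    rcases hη_nonneg.eq_or_lt with h | h
    · exfalso; rw [← h] at hη2_pos; norm_num at hη2_pos
    · exact h
  set a : ℝ := (n:ℝ) * η with ha_def
  have ha0 : 0 < a := by positivity
  have ha2 : 2 * p * a ^ 2 = v := by
    have hc0' : c ≠ 0 := ne_of_gt hc0
    have hn0' : (n:ℝ) ≠ 0 := ne_of_gt hn0
    have hε0' : ε ≠ 0 := ne_of_gt hε0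
    rw [ha_def, mul_pow, hp_def, hη2]
    field_simp
  -- distinct atoms
  have hne1 : m - a ≠ m := by intro h; linarith [ha0]
  have hne2 : m + a ≠ m := by intro h; linarith [ha0]
  have hne3 : m - a ≠ m + a := by intro h; linarith [ha0]
  -- the measure
  set μ : Measure ℝ := (ENNReal.ofReal p) • Measure.dirac (m - a)
      + (ENNReal.ofReal p) • Measure.dirac (m + a)
      + (ENNReal.ofReal (1 - 2*p)) • Measure.dirac m with hμ_def
  have hμ_prob : IsProbabilityMeasure μ := by
    constructor
    simp only [hμ_def, Measure.add_apply, Measure.smul_apply, smul_eq_mul,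
      measure_univ, mul_one]
    rw [← ENNReal.ofReal_add hp0.le hp0.le, ← ENNReal.ofReal_add (by linarith) h12p]
    norm_num
    ring
  haveI := hμ_prob
  -- integral formula
  have key : ∀ f : ℝ → ℝ, Measurable f →
      ∫ x, f x ∂μ = p * f (m-a) + p * f (m+a) + (1-2*p) * f m := by
    intro f hf
    have hd : ∀ x : ℝ, Integrable f (Measure.dirac x) := fun x =>
      (integrable_congr (MeasureTheory.ae_eq_dirac' hf)).mpr (integrable_const _)
    have h1 : Integrable f ((ENNReal.ofReal p) • Measure.dirac (m-a)) :=
      (hd _).smul_measure ENNReal.ofReal_ne_top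
    have h2 : Integrable f ((ENNReal.ofReal p) • Measure.dirac (m+a)) :=
      (hd _).smul_measure ENNReal.ofReal_ne_top
    have h3 : Integrable f ((ENNReal.ofReal (1-2*p)) • Measure.dirac m) :=
      (hd _).smul_measure ENNReal.ofReal_ne_top
    rw [hμ_def, integral_add_measure (h1.add_measure h2) h3,
      integral_add_measure h1 h2, integral_smul_measure, integral_smul_measure,
      integral_smul_measure, integral_dirac, integral_dirac, integral_dirac,
      ENNReal.toReal_ofReal hp0.le, ENNReal.toReal_ofReal h12p]
    simp [smul_eq_mul]
  have hmean : ∫ x, x ∂μ = m := by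
    rw [key (fun x => x) measurable_id]; ring
  have hvar : ∫ x, (x - m)^2 ∂μ = v := by
    rw [key (fun x => (x - m)^2) ((measurable_id.sub_const m).pow_const 2)]
    have : p * (m - a - m)^2 + p * (m + a - m)^2 + (1-2*p) * (m - m)^2
        = 2 * p * a^2 := by ring
    rw [this, ha2]
  -- measure of singletons
  have hμm : μ {m} = ENNReal.ofReal (1 - 2*p) := by
    simp only [hμ_def, Measure.add_apply, Measure.smul_apply, smul_eq_mul]
    rw [Measure.dirac_apply, Measure.dirac_apply, Measure.dirac_apply]
    simp [Set.indicator_apply, hne1, hne2]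
  have hμpair : μ {m - a, m + a} = ENNReal.ofReal (2*p) := by
    simp only [hμ_def, Measure.add_apply, Measure.smul_apply, smul_eq_mul]
    rw [Measure.dirac_apply, Measure.dirac_apply, Measure.dirac_apply]
    have hm1 : m - a ∈ ({m - a, m + a} : Set ℝ) := by left; rfl
    have hm2 : m + a ∈ ({m - a, m + a} : Set ℝ) := by right; rfl
    have hm3 : m ∉ ({m - a, m + a} : Set ℝ) := by
      intro h; rcases h with h | h
      · exact hne1 h.symm
      · exact hne2 h.symm
    simp [Set.indicator_apply, hm1, hm2, hm3]
    rw [← ENNReal.ofReal_add hp0.le hp0.le]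
    norm_num; ring_nf
    rw [ENNReal.ofReal_mul' (by norm_num : (0:ℝ) ≤ 2), ENNReal.ofReal_ofNat]
  refine ⟨μ, hμ_prob, hmean, hvar, ?_⟩
  -- the events
  set A : Fin n → Set (Fin n → ℝ) := fun i =>
    Set.univ.pi (fun j => if j = i then ({m - a, m + a} : Set ℝ) else {m}) with hA_def
  have hA_meas : ∀ i, MeasurableSet (A i) := by
    intro i
    apply MeasurableSet.univ_pi
    intro j
    split_ifs
    · exact (measurableSet_singleton _).insert _
    · exact measurableSet_singleton _
  have hA_sub : ∀ i, A i ⊆ {y : Fin n → ℝ |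
      Real.sqrt (v / (2 * n * ε)) * (1 - 2 * Real.exp 1 * ε / n) ^ ((n - 1 : ℝ) / 2)
        ≤ |(∑ i, y i) / n - m|} := by
    intro i y hy
    simp only [hA_def, Set.mem_pi, Set.mem_univ, forall_true_left] at hy
    have hyi : y i ∈ ({m - a, m + a} : Set ℝ) := by
      have := hy i; simpa using this
    have hyj : ∀ j, j ≠ i → y j = m := by
      intro j hj
      have := hy j; rw [if_neg hj] at this; simpa using this
    have hsum : ∑ j, y j = y i + ((k:ℝ)) * m := by
      rw [← Finset.add_sum_erase Finset.univ y (Finset.mem_univ i)]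
      congr 1
      rw [Finset.sum_congr rfl (fun j hj => hyj j (Finset.ne_of_mem_erase hj)),
        Finset.sum_const, Finset.card_erase_of_mem (Finset.mem_univ i),
        Finset.card_univ, Fintype.card_fin, nsmul_eq_mul]
    have hdiff : (∑ j, y j) / n - m = (y i - m) / n := by
      rw [hsum, hk_cast]
      field_simp
      ring
    simp only [Set.mem_setOf_eq]
    rw [hdiff]
    have habs : |(y i - m) / (n:ℝ)| = η := by
      rcases hyi with h | h
      · rw [h]
        have : (m - a - m) / (n:ℝ) = -η := by
          rw [ha_def]; field_simp; try ring
        rw [this, abs_neg, abs_of_pos hη0]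
      · rw [h]
        have : (m + a - m) / (n:ℝ) = η := by
          rw [ha_def]; field_simp; try ring
        rw [this, abs_of_pos hη0]
    rw [habs]
  have hA_disj : Pairwise (Function.onFun Disjoint A) := by
    intro i j hij
    rw [Function.onFun, Set.disjoint_left]
    intro y hyi hyj
    simp only [hA_def, Set.mem_pi, Set.mem_univ, forall_true_left] at hyi hyj
    have h1 := hyi j; rw [if_neg (Ne.symm hij)] at h1
    have h2 := hyj j; rw [if_pos rfl] at h2
    simp only [Set.mem_singleton_iff] at h1
    rcases h2 with h | h
    · exact hne1 (h1 ▸ h).symm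
    · exact hne2 (h1 ▸ h).symm
  -- measure of each A i
  have hA_measval : ∀ i, (Measure.pi fun _ : Fin n => μ) (A i)
      = ENNReal.ofReal (2*p) * (ENNReal.ofReal (1 - 2*p)) ^ k := by
    intro i
    rw [hA_def]
    rw [Measure.pi_pi]
    have : ∀ j : Fin n, μ (if j = i then ({m - a, m + a} : Set ℝ) else {m})
        = if j = i then ENNReal.ofReal (2*p) else ENNReal.ofReal (1 - 2*p) := by
      intro j; split_ifs
      · exact hμpair
      · exact hμm
    rw [Finset.prod_congr rfl (fun j _ => this j)]
    rw [← Finset.mul_prod_erase Finset.univ _ (Finset.mem_univ i), if_pos rfl]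
    congr 1
    rw [Finset.prod_congr rfl (fun j hj => if_neg (Finset.ne_of_mem_erase hj)),
      Finset.prod_const, Finset.card_erase_of_mem (Finset.mem_univ i),
      Finset.card_univ, Fintype.card_fin]
  -- final computation
  have hunion : (Measure.pi fun _ : Fin n => μ) (⋃ i, A i)
      = (n:ℕ) * (ENNReal.ofReal (2*p) * (ENNReal.ofReal (1 - 2*p)) ^ k) := by
    rw [measure_iUnion hA_disj hA_meas, tsum_fintype]
    rw [Finset.sum_congr rfl (fun i _ => hA_measval i), Finset.sum_const,
      Finset.card_univ, Fintype.card_fin, nsmul_eq_mul]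
  calc ENNReal.ofReal (2 * ε)
      ≤ (n:ℕ) * (ENNReal.ofReal (2*p) * (ENNReal.ofReal (1 - 2*p)) ^ k) := by
        rw [← ENNReal.ofReal_pow h12p, ← ENNReal.ofReal_mul (by linarith),
          ← ENNReal.ofReal_natCast, ← ENNReal.ofReal_mul (by positivity)]
        apply ENNReal.ofReal_le_ofReal
        have h1 : c ≤ (1 - 2*p)^k := pow_le_pow_left₀ hb0 hbp k
        have h3 : (n:ℝ) * (2 * p * c) = 2 * ε := by
          rw [hp_def]; field_simp
        have h2 : (n:ℝ) * (2 * p * c) ≤ (n:ℝ) * (2 * p * (1 - 2*p)^k) := by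
          gcongr
        linarith
    _ = (Measure.pi fun _ : Fin n => μ) (⋃ i, A i) := hunion.symm
    _ ≤ _ := measure_mono (Set.iUnion_subset hA_sub)
end

section
/- Let g(x) = x - log(1 + x + x²/2) for x ≥ 0 and g(x) = x + log(1 - x + x²/2) for x ≤ 0. Then for all x ∈ ℝ, |g(x)| ≤ min{|x|, x²/(4(1+√2)), |x|³/6}. -/
open Real

noncomputable def gFun (x : ℝ) : ℝ :=
  if 0 ≤ x then x - Real.log (1 + x + x ^ 2 / 2)
  else x + Real.log (1 - x + x ^ 2 / 2)

lemma posD (x : ℝ) : 0 < 1 + x + x ^ 2 / 2 := by nlinarith [sq_nonneg (x + 1)]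

lemma hasDerivD (x : ℝ) : HasDerivAt (fun x : ℝ => 1 + x + x ^ 2 / 2) (1 + x) x := by
  have h1 : HasDerivAt (fun x : ℝ => 1 + x) (1 : ℝ) x := (hasDerivAt_id x).const_add 1
  have h2 : HasDerivAt (fun x : ℝ => x ^ 2 / 2) ((2 * x ^ 1) / 2) x :=
    (hasDerivAt_pow 2 x).div_const 2
  have := h1.add h2
  exact this.congr_deriv (by ring)

lemma hasDerivLog (x : ℝ) :
    HasDerivAt (fun x : ℝ => Real.log (1 + x + x ^ 2 / 2)) ((1 + x) / (1 + x + x ^ 2 / 2)) x :=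
  (hasDerivD x).log (posD x).ne'

lemma mono_help (F F' : ℝ → ℝ) (hF : ∀ x, HasDerivAt F (F' x) x)
    (h' : ∀ x, 0 < x → 0 ≤ F' x) : MonotoneOn F (Set.Ici 0) := by
  apply monotoneOn_of_deriv_nonneg (convex_Ici 0)
  · exact fun x _ => (hF x).continuousAt.continuousWithinAt
  · exact fun x _ => (hF x).differentiableAt.differentiableWithinAt
  · intro x hx
    rw [(hF x).deriv]
    exact h' x (by simpa [interior_Ici] using hx)

lemma bound0 (x : ℝ) (hx : 0 ≤ x) : 0 ≤ x - Real.log (1 + x + x ^ 2 / 2) := by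
  have mono : MonotoneOn (fun x : ℝ => x - Real.log (1 + x + x ^ 2 / 2)) (Set.Ici 0) := by
    apply mono_help _ (fun x => 1 - (1 + x) / (1 + x + x ^ 2 / 2))
    · exact fun x => (hasDerivAt_id x).sub (hasDerivLog x)
    · intro x hx
      have hD := posD x
      rw [sub_nonneg, div_le_one hD]
      nlinarith
  have := mono Set.self_mem_Ici hx hx
  simpa using this

lemma log_nonneg' (x : ℝ) (hx : 0 ≤ x) : 0 ≤ Real.log (1 + x + x ^ 2 / 2) := by
  apply Real.log_nonneg; nlinarith

lemma bound2 (x : ℝ) (hx : 0 ≤ x) :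
    x - Real.log (1 + x + x ^ 2 / 2) ≤ x ^ 2 / (4 * (1 + Real.sqrt 2)) := by
  have hs : (0:ℝ) < Real.sqrt 2 := Real.sqrt_pos.mpr (by norm_num)
  have hs2 : Real.sqrt 2 ^ 2 = 2 := Real.sq_sqrt (by norm_num)
  have mono : MonotoneOn
      (fun x : ℝ => Real.log (1 + x + x ^ 2 / 2) - x + x ^ 2 / (4 * (1 + Real.sqrt 2)))
      (Set.Ici 0) := by
    apply mono_help _
      (fun x => (1 + x) / (1 + x + x ^ 2 / 2) - 1 + x / (2 * (1 + Real.sqrt 2)))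
    · intro x
      have h1 : HasDerivAt (fun x : ℝ => x ^ 2 / (4 * (1 + Real.sqrt 2)))
          ((2 * x ^ 1) / (4 * (1 + Real.sqrt 2))) x := (hasDerivAt_pow 2 x).div_const _
      have := ((hasDerivLog x).sub (hasDerivAt_id x)).add h1
      refine this.congr_deriv ?_
      have : (0:ℝ) < 1 + Real.sqrt 2 := by positivity
      field_simp
      ring
    · intro x hx
      have hD := posD x
      have key : (1 + x) / (1 + x + x ^ 2 / 2) - 1 + x / (2 * (1 + Real.sqrt 2))
          = (x * (1 - x / Real.sqrt 2) ^ 2) / ((1 + x + x ^ 2 / 2) * (2 * (1 + Real.sqrt 2))) := by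
        field_simp
        linear_combination (x^3 - 2*x^2*Real.sqrt 2) * hs2
      rw [key]
      positivity
  have := mono Set.self_mem_Ici hx hx
  simp only [Real.log_one] at this
  simp only [ne_eq, OfNat.ofNat_ne_zero, not_false_eq_true, zero_pow, zero_div] at this
  norm_num at this
  linarith [this]

lemma bound3 (x : ℝ) (hx : 0 ≤ x) :
    x - Real.log (1 + x + x ^ 2 / 2) ≤ x ^ 3 / 6 := by
  have mono : MonotoneOn
      (fun x : ℝ => Real.log (1 + x + x ^ 2 / 2) - x + x ^ 3 / 6) (Set.Ici 0) := by
    apply mono_help _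
      (fun x => (1 + x) / (1 + x + x ^ 2 / 2) - 1 + x ^ 2 / 2)
    · intro x
      have h1 : HasDerivAt (fun x : ℝ => x ^ 3 / 6) ((3 * x ^ 2) / 6) x :=
        (hasDerivAt_pow 3 x).div_const 6
      have := ((hasDerivLog x).sub (hasDerivAt_id x)).add h1
      exact this.congr_deriv (by ring)
    · intro x hx
      have hD := posD x
      have key : (1 + x) / (1 + x + x ^ 2 / 2) - 1 + x ^ 2 / 2
          = (x ^ 2 / 2 * (x + x ^ 2 / 2)) / (1 + x + x ^ 2 / 2) := by
        field_simp
        ring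
      rw [key]
      positivity
  have := mono Set.self_mem_Ici hx hx
  norm_num at this
  linarith [this]

lemma main_nonneg (x : ℝ) (hx : 0 ≤ x) :
    |x - Real.log (1 + x + x ^ 2 / 2)| ≤
      min x (min (x ^ 2 / (4 * (1 + Real.sqrt 2))) (x ^ 3 / 6)) := by
  rw [abs_of_nonneg (bound0 x hx)]
  refine le_min ?_ (le_min (bound2 x hx) (bound3 x hx))
  have := log_nonneg' x hx
  linarith

theorem stmt_13 (x : ℝ) :
    |gFun x| ≤ min |x| (min (x ^ 2 / (4 * (1 + Real.sqrt 2))) (|x| ^ 3 / 6)) := by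
  rcases le_or_gt 0 x with hx | hx
  · have h := main_nonneg x hx
    rw [gFun, if_pos hx, abs_of_nonneg hx]
    exact h
  · have hy : 0 ≤ -x := by linarith
    have h := main_nonneg (-x) hy
    rw [gFun, if_neg (not_le.mpr hx)]
    have heq : x + Real.log (1 - x + x ^ 2 / 2) = -((-x) - Real.log (1 + (-x) + (-x) ^ 2 / 2)) := by
      ring_nf
    rw [heq, abs_neg, abs_of_neg hx]
    convert h using 3 <;> ring
end
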